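/- arXiv:2009.02237 — 6 statements merged into one kernel-verified Lean document; each statement's English description precedes it below -/
import Mathlib

section
/- Let q₁,…,qₘ, p be prime powers with ∏ᵢ qᵢ coprime to p, let K = ∏ᵢ F_{qᵢ}, let C be an (F_p, K)-linearly closed clonoid, and let g ∈ C^[1] be 0-absorbing in [m]. For each k ≥ 1 define t_k : ∏ᵢ F_{qᵢ}^k → F_p by t_k(λ₁e₁,…,λₘe₁) = g(λ₁,…,λₘ) for all λᵢ ∈ F_{qᵢ}, and t_k(x) = 0 for all other x. Then t_k is 0-absorbing in [m] and t_k belongs to the (F_p, K)-linearly closed clonoid generated by C^[1], for every k ∈ ℕ. -/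
/-- `C` is an `(F, K)`-linearly closed clonoid: a nonempty set of finitary functions
`∏ᵢ Kᵢⁿ → F` closed under `F`-linear combinations and under precomposition with tuples
of `Kᵢ`-linear maps (given by matrices). -/
def IsLCC {m : ℕ} (K : Fin m → Type*) [∀ i, Field (K i)] (F : Type*) [CommRing F]
    (C : ∀ n : ℕ, Set ((∀ i, Fin n → K i) → F)) : Prop :=
  (∃ n, (C n).Nonempty) ∧
  (∀ (n : ℕ) (a b : F) (f g : (∀ i, Fin n → K i) → F), f ∈ C n → g ∈ C n →
    (fun x => a * f x + b * g x) ∈ C n) ∧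
  (∀ (n l : ℕ) (f : (∀ i, Fin n → K i) → F), f ∈ C n →
    ∀ A : ∀ i, Matrix (Fin n) (Fin l) (K i),
      (fun x : ∀ i, Fin l → K i => f (fun i => (A i).mulVec (x i))) ∈ C l)

/-- The `(F, K)`-linearly closed clonoid generated by a set `S` of unary functions. -/
def ClgU {m : ℕ} (K : Fin m → Type*) [∀ i, Field (K i)] (F : Type*) [CommRing F]
    (S : Set ((∀ i, Fin 1 → K i) → F)) : ∀ n : ℕ, Set ((∀ i, Fin n → K i) → F) :=
  fun n => {f | ∀ C, IsLCC K F C → S ⊆ C 1 → f ∈ C n}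

section Aux

variable {m : ℕ} (K : Fin m → Type*) [∀ i, Field (K i)] (F : Type*) [CommRing F]
  (C : ∀ n : ℕ, Set ((∀ i, Fin n → K i) → F))

lemma lcc_zero_mem (hC : IsLCC K F C) (l : ℕ) :
    (fun _ : ∀ i, Fin l → K i => (0:F)) ∈ C l := by
  obtain ⟨n, f, hf⟩ := hC.1
  have h0 : (fun x => (0:F) * f x + 0 * f x) ∈ C n := hC.2.1 n 0 0 f f hf hf
  have h0' : (fun _ : ∀ i, Fin n → K i => (0:F)) ∈ C n := by
    simpa using h0
  have h2 := hC.2.2 n l _ h0' (fun _ => 0)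
  simpa using h2

lemma lcc_smul_mem (hC : IsLCC K F C) (n : ℕ) (a : F) (f : (∀ i, Fin n → K i) → F)
    (hf : f ∈ C n) : (fun x => a * f x) ∈ C n := by
  have := hC.2.1 n a 0 f f hf hf
  simpa using this

lemma lcc_sum_mem (hC : IsLCC K F C) (n : ℕ) {ι : Type*} (s : Finset ι)
    (G : ι → ((∀ i, Fin n → K i) → F)) (hG : ∀ a ∈ s, G a ∈ C n) :
    (fun x => ∑ a ∈ s, G a x) ∈ C n := by
  classical
  revert hG
  refine Finset.induction_on s ?_ ?_
  · intro _
    simpa using lcc_zero_mem K F C hC n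
  · intro a s ha ih hG
    have h1 := hC.2.1 n 1 1 (G a) (fun x => ∑ b ∈ s, G b x)
      (hG a (Finset.mem_insert_self a s)) (ih fun b hb => hG b (Finset.mem_insert_of_mem hb))
    simpa [Finset.sum_insert ha] using h1

end Aux

def headTailEquiv {m k : ℕ} (K : Fin m → Type*) (hk : 1 ≤ k) :
    (∀ i, Fin k → K i) ≃ ((∀ i, K i) × ∀ i, {j : Fin k // (j : ℕ) ≠ 0} → K i) where
  toFun a := (fun i => a i ⟨0, hk⟩, fun i j => a i j.1)
  invFun p i j := if h : (j : ℕ) = 0 then p.1 i else p.2 i ⟨j, h⟩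
  left_inv a := by
    funext i j
    by_cases h : (j : ℕ) = 0
    · have hj : j = ⟨0, hk⟩ := Fin.ext h
      subst hj
      simp
    · simp [h]
  right_inv p := by
    refine Prod.ext ?_ ?_
    · funext i
      simp
    · funext i j
      simp [j.2]

lemma headTailEquiv_symm_apply {m k : ℕ} (K : Fin m → Type*) (hk : 1 ≤ k)
    (p : (∀ i, K i) × ∀ i, {j : Fin k // (j : ℕ) ≠ 0} → K i) (i : Fin m) (j : Fin k) :
    (headTailEquiv K hk).symm p i j = if h : (j : ℕ) = 0 then p.1 i else p.2 i ⟨j, h⟩ := rfl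


/-- if `g ∈ C^[1]` is `0`-absorbing in `[m]`, then for every `k` the
function `t_k`, supported on the product of lines spanned by the first standard basis
vectors and agreeing there with `g`, is `0`-absorbing in `[m]` and lies in `Clg(C^[1])`. -/
theorem tk_mem_clg_unary
    {m : ℕ} (K : Fin m → Type*) [∀ i, Field (K i)] [∀ i, Fintype (K i)]
    (Fp : Type*) [Field Fp] [Fintype Fp]
    (hcop : Nat.Coprime (∏ i, Fintype.card (K i)) (Fintype.card Fp))
    (C : ∀ n : ℕ, Set ((∀ i, Fin n → K i) → Fp)) (hC : IsLCC K Fp C)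
    (g : (∀ i, Fin 1 → K i) → Fp) (hg : g ∈ C 1)
    (hgabs : ∀ x : ∀ i, Fin 1 → K i, (∃ i, x i = 0) → g x = 0)
    (k : ℕ) (hk : 1 ≤ k)
    (t : (∀ i, Fin k → K i) → Fp)
    (ht1 : ∀ lam : ∀ i, K i,
      t (fun i => fun j : Fin k => if (j : ℕ) = 0 then lam i else 0)
        = g (fun i => fun _ : Fin 1 => lam i))
    (ht0 : ∀ x : ∀ i, Fin k → K i,
      (¬ ∃ lam : ∀ i, K i, x = fun i => fun j : Fin k => if (j : ℕ) = 0 then lam i else 0) →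
      t x = 0) :
    (∀ x : ∀ i, Fin k → K i, (∃ i, x i = 0) → t x = 0) ∧ t ∈ ClgU K Fp (C 1) k := by
  classical
  -- Part 1 : absorption
  have habs : ∀ x : ∀ i, Fin k → K i, (∃ i, x i = 0) → t x = 0 := by
    intro x hix
    by_cases hx : ∃ lam : ∀ i, K i, x = fun i => fun j : Fin k => if (j : ℕ) = 0 then lam i else 0
    · obtain ⟨lam, rfl⟩ := hx
      obtain ⟨i, hi⟩ := hix
      rw [ht1 lam]
      apply hgabs
      refine ⟨i, ?_⟩
      have hl : lam i = 0 := by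
        have h2 := congrFun hi (⟨0, hk⟩ : Fin k)
        simpa using h2
      funext r
      simp [hl]
    · exact ht0 x hx
  refine ⟨habs, ?_⟩
  -- Setup for Part 2
  set j0 : Fin k := ⟨0, hk⟩ with hj0def
  have hj0v : (j0 : ℕ) = 0 := rfl
  let w : ∀ i, K i → Fp := fun i s => if s = 0 then (-1 : Fp) else if s = 1 then 1 else 0
  have wneg : ∀ (i : Fin m) (s : K i), w i (1 - s) = - w i s := by
    intro i s
    by_cases h0 : s = 0
    · simp [w, h0]
    · by_cases h1 : s = 1
      · simp [w, h1]
      · have hA : (1:K i) - s ≠ 0 := sub_ne_zero.mpr fun h => h1 h.symm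
        have hB : (1:K i) - s ≠ 1 := fun h => h0 (by rwa [sub_eq_self] at h)
        simp [w, h0, h1, hA, hB]
  let ip : (∀ i, Fin k → K i) → (∀ i, Fin k → K i) → (∀ i, Fin 1 → K i) :=
    fun a x i => fun _ => ∑ j, a i j * x i j
  let f : (∀ i, Fin k → K i) → (∀ i, Fin k → K i) → Fp :=
    fun a x => (∏ i, w i (a i j0)) * g (ip a x)
  let T := ∀ i, {j : Fin k // (j : ℕ) ≠ 0} → K i
  let N : Fp := (Fintype.card T : Fp)
  -- N is nonzero
  have hN : N ≠ 0 := by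
    intro hN0
    set p := ringChar Fp with hp
    haveI : CharP Fp p := ringChar.charP Fp
    obtain ⟨n, hprime, hcard⟩ := FiniteField.card Fp p
    have hdvdT : p ∣ Fintype.card T := (CharP.cast_eq_zero_iff Fp p _).mp hN0
    have hcardT : Fintype.card T = ∏ i, Fintype.card (K i) ^ Fintype.card {j : Fin k // (j : ℕ) ≠ 0} := by
      simp [T, Fintype.card_pi, Fintype.card_fun]
    rw [hcardT] at hdvdT
    obtain ⟨i, _, hdi⟩ := hprime.prime.exists_mem_finset_dvd hdvdT
    have hdvdKi : p ∣ Fintype.card (K i) := hprime.dvd_of_dvd_pow hdi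
    have h1 : p ∣ ∏ i, Fintype.card (K i) :=
      dvd_trans hdvdKi (Finset.dvd_prod_of_mem _ (Finset.mem_univ i))
    have h2 : p ∣ Fintype.card Fp := by
      rw [hcard]; exact dvd_pow_self p (by exact_mod_cast n.ne_zero)
    have := Nat.eq_one_of_dvd_one (Nat.dvd_gcd h1 h2 |>.trans hcop.dvd)
    exact hprime.one_lt.ne' this
  -- key identity
  have key : ∀ x : ∀ i, Fin k → K i, (∑ a : ∀ i, Fin k → K i, f a x) = N * t x := by
    intro x
    by_cases hx : ∃ lam : ∀ i, K i, x = fun i => fun j : Fin k => if (j : ℕ) = 0 then lam i else 0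
    · obtain ⟨lam, hxe⟩ := hx
      have hxp : ∀ i j, x i j = if (j : ℕ) = 0 then lam i else 0 := by
        intro i j; rw [hxe]
      have htx : t x = g (fun i => fun _ : Fin 1 => lam i) := by rw [hxe, ht1 lam]
      have ha : ∀ (h : ∀ i, K i) (c : T) (i : Fin m),
          (headTailEquiv K hk).symm (h, c) i j0 = h i := by
        intro h c i
        rw [headTailEquiv_symm_apply, dif_pos hj0v]
      have hstep : ∀ (h : ∀ i, K i) (c : T),
          f ((headTailEquiv K hk).symm (h, c)) x
            = (∏ i, w i (h i)) * g (fun i => fun _ : Fin 1 => h i * lam i) := by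
        intro h c
        simp only [f]
        have harg : ip ((headTailEquiv K hk).symm (h, c)) x
            = fun i => fun _ : Fin 1 => h i * lam i := by
          funext i r
          simp only [ip]
          rw [Finset.sum_eq_single j0]
          · rw [ha h c i, hxp i j0, if_pos hj0v]
          · intro b _ hb
            have hbv : (b : ℕ) ≠ 0 := fun hh => hb (Fin.ext hh)
            rw [hxp i b, if_neg hbv, mul_zero]
          · intro hj; exact absurd (Finset.mem_univ j0) hj
        have hprod : (∏ i, w i ((headTailEquiv K hk).symm (h, c) i j0)) = ∏ i, w i (h i) :=
          Finset.prod_congr rfl fun i _ => by rw [ha h c i]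
        rw [harg, hprod]
      have hsingle : (∑ h : ∀ i, K i,
            (∏ i, w i (h i)) * g (fun i => fun _ : Fin 1 => h i * lam i))
          = g (fun i => fun _ : Fin 1 => lam i) := by
        rw [Finset.sum_eq_single (fun i => (1 : K i))]
        · simp [w]
        · intro h _ hne
          obtain ⟨i1, hi1⟩ := Function.ne_iff.mp hne
          by_cases h0 : h i1 = 0
          · have hzero : g (fun i => fun _ : Fin 1 => h i * lam i) = 0 :=
              hgabs _ ⟨i1, by funext r; simp [h0]⟩
            rw [hzero, mul_zero]
          · rw [Finset.prod_eq_zero (Finset.mem_univ i1) (by simp [w, h0, hi1]), zero_mul]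
        · intro hj; exact absurd (Finset.mem_univ _) hj
      rw [htx]
      calc (∑ a : ∀ i, Fin k → K i, f a x)
          = ∑ p : (∀ i, K i) × T, f ((headTailEquiv K hk).symm p) x :=
            (Equiv.sum_comp (headTailEquiv K hk).symm (fun a => f a x)).symm
        _ = ∑ h : ∀ i, K i, ∑ c : T, f ((headTailEquiv K hk).symm (h, c)) x :=
            Fintype.sum_prod_type _
        _ = ∑ h : ∀ i, K i, (Fintype.card T) •
              ((∏ i, w i (h i)) * g (fun i => fun _ : Fin 1 => h i * lam i)) := by
            refine Finset.sum_congr rfl fun h _ => ?_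
            rw [Finset.sum_congr rfl fun c _ => hstep h c, Finset.sum_const, Finset.card_univ]
        _ = (Fintype.card T : Fp) * ∑ h : ∀ i, K i,
              (∏ i, w i (h i)) * g (fun i => fun _ : Fin 1 => h i * lam i) := by
            rw [← Finset.smul_sum, nsmul_eq_mul]
        _ = N * g (fun i => fun _ : Fin 1 => lam i) := by rw [hsingle]
    · rw [ht0 x hx, mul_zero]
      have hne : x ≠ fun i => fun j : Fin k => if (j : ℕ) = 0 then x i j0 else 0 :=
        fun h => hx ⟨fun i => x i j0, h⟩
      obtain ⟨i0, hi0⟩ := Function.ne_iff.mp hne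
      obtain ⟨jb, hjb⟩ := Function.ne_iff.mp hi0
      have hjbv : (jb : ℕ) ≠ 0 := by
        intro h
        apply hjb
        have hjj : jb = j0 := Fin.ext h
        rw [if_pos h, hjj]
      have hxjb : x i0 jb ≠ 0 := by
        intro h
        apply hjb
        rw [if_neg hjbv, h]
      have hj0jb : j0 ≠ jb := fun h => hjbv (h ▸ hj0v)
      let σ : (∀ i, Fin k → K i) → (∀ i, Fin k → K i) :=
        fun a => Function.update a i0 (fun j =>
          a i0 j + (if j = j0 then 1 - 2 * a i0 j0 else 0)
                 + (if j = jb then (2 * a i0 j0 - 1) * (x i0 j0 / x i0 jb) else 0))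
      have hσ_i0 : ∀ (a : ∀ i, Fin k → K i) (j : Fin k), σ a i0 j
          = a i0 j + (if j = j0 then 1 - 2 * a i0 j0 else 0)
                   + (if j = jb then (2 * a i0 j0 - 1) * (x i0 j0 / x i0 jb) else 0) := by
        intro a j
        simp only [σ, Function.update_self]
      have hσ_ne : ∀ (a : ∀ i, Fin k → K i) (i : Fin m), i ≠ i0 → σ a i = a i := by
        intro a i hi
        simp only [σ, Function.update_of_ne hi]
      have hhead : ∀ a : ∀ i, Fin k → K i, σ a i0 j0 = 1 - a i0 j0 := by
        intro a
        rw [hσ_i0, if_pos rfl, if_neg hj0jb]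
        ring
      have hip : ∀ a : ∀ i, Fin k → K i, ip (σ a) x = ip a x := by
        intro a
        funext i r
        simp only [ip]
        by_cases hi : i = i0
        · rw [hi]
          have hrw : ∀ j : Fin k, σ a i0 j * x i0 j
              = a i0 j * x i0 j + (if j = j0 then (1 - 2 * a i0 j0) * x i0 j else 0)
                + (if j = jb then (2 * a i0 j0 - 1) * (x i0 j0 / x i0 jb) * x i0 j else 0) := by
            intro j
            rw [hσ_i0]
            by_cases hj1 : j = j0
            · have hj2 : j ≠ jb := by rw [hj1]; exact hj0jb
              rw [if_pos hj1, if_pos hj1, if_neg hj2, if_neg hj2]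
              ring
            · by_cases hj2 : j = jb
              · rw [if_neg hj1, if_neg hj1, if_pos hj2, if_pos hj2]
                ring
              · rw [if_neg hj1, if_neg hj1, if_neg hj2, if_neg hj2]
                ring
          rw [Finset.sum_congr rfl fun j _ => hrw j]
          rw [Finset.sum_add_distrib, Finset.sum_add_distrib,
            Finset.sum_ite_eq' Finset.univ j0
              (fun j => (1 - 2 * a i0 j0) * x i0 j),
            Finset.sum_ite_eq' Finset.univ jb
              (fun j => (2 * a i0 j0 - 1) * (x i0 j0 / x i0 jb) * x i0 j)]
          simp only [Finset.mem_univ, if_true]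
          have hc : (2 * a i0 j0 - 1) * (x i0 j0 / x i0 jb) * x i0 jb
              = (2 * a i0 j0 - 1) * x i0 j0 := by
            rw [mul_assoc, div_mul_cancel₀ _ hxjb]
          rw [hc]
          ring
        · rw [hσ_ne a i hi]
      have hW : ∀ a : ∀ i, Fin k → K i, (∏ i, w i (σ a i j0)) = - ∏ i, w i (a i j0) := by
        intro a
        have hsplit : ∀ b : ∀ i, Fin k → K i,
            (∏ i, w i (b i j0)) = (∏ i ∈ Finset.univ.erase i0, w i (b i j0)) * w i0 (b i0 j0) :=
          fun b => (Finset.prod_erase_mul _ _ (Finset.mem_univ i0)).symm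
        rw [hsplit (σ a), hsplit a,
          Finset.prod_congr rfl fun i hi => by rw [hσ_ne a i (Finset.ne_of_mem_erase hi)],
          hhead a, wneg]
        ring
      refine Finset.sum_ninvolution σ ?_ ?_ (fun a => Finset.mem_univ _) ?_
      · intro a
        show f a x + f (σ a) x = 0
        simp only [f]
        rw [hip a, hW a]
        ring
      · intro a hfa hσa
        apply hfa
        have hs : (1 : K i0) - a i0 j0 = a i0 j0 := by
          rw [← hhead a, hσa]
        have h0 : a i0 j0 ≠ 0 := by
          intro h; rw [h, sub_zero] at hs; exact one_ne_zero hs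
        have h1 : a i0 j0 ≠ 1 := by
          intro h; rw [h, sub_self] at hs; exact zero_ne_one hs
        show f a x = 0
        simp only [f]
        rw [Finset.prod_eq_zero (Finset.mem_univ i0) (by simp [w, h0, h1]), zero_mul]
      · intro a
        funext i j
        by_cases hi : i = i0
        · rw [hi]
          rw [hσ_i0 (σ a) j, hσ_i0 a j, hhead a]
          by_cases hj1 : j = j0
          · have hj2 : j ≠ jb := by rw [hj1]; exact hj0jb
            rw [if_pos hj1, if_pos hj1, if_neg hj2, if_neg hj2]
            ring
          · by_cases hj2 : j = jb
            · rw [if_neg hj1, if_neg hj1, if_pos hj2, if_pos hj2]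
              ring
            · rw [if_neg hj1, if_neg hj1, if_neg hj2, if_neg hj2]
              ring
        · rw [hσ_ne (σ a) i hi, hσ_ne a i hi]
  -- conclude membership
  intro C' hC' hsub
  have hg' : g ∈ C' 1 := hsub hg
  have hB : ∀ a : ∀ i, Fin k → K i, (fun x => f a x) ∈ C' k := by
    intro a
    have hcomp := hC'.2.2 1 k g hg' (fun i => Matrix.of (fun _ j => a i j))
    have hsm := lcc_smul_mem K Fp C' hC' k (∏ i, w i (a i j0)) _ hcomp
    have heq : (fun x => f a x)
        = fun x : ∀ i, Fin k → K i => (∏ i, w i (a i j0)) *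
            g (fun i => ((Matrix.of (fun _ j => a i j) : Matrix (Fin 1) (Fin k) (K i))).mulVec (x i)) := by
      funext x
      simp only [f]
      congr 1
    rw [heq]
    exact hsm
  have hsum : (fun x => ∑ a : ∀ i, Fin k → K i, f a x) ∈ C' k :=
    lcc_sum_mem K Fp C' hC' k Finset.univ (fun a => fun x => f a x) (fun a _ => hB a)
  have hfin : (fun x => N⁻¹ * ∑ a : ∀ i, Fin k → K i, f a x) ∈ C' k :=
    lcc_smul_mem K Fp C' hC' k N⁻¹ _ hsum
  have htEq : t = fun x => N⁻¹ * ∑ a : ∀ i, Fin k → K i, f a x := by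
    funext x
    rw [key x, inv_mul_cancel_left₀ hN]
  rw [htEq]
  exact hfin
end

section
/- Let q₁,…,qₘ, p be prime powers with ∏ᵢ qᵢ coprime to p and K = ∏ᵢ F_{qᵢ}. Let C be an (F_p, K)-linearly closed clonoid, I ⊆ [m], and f ∈ C an n-ary function that is 0-absorbing in I. Then f belongs to the (F_p, K)-linearly closed clonoid generated by the unary part C^[1]. -/
set_option linter.unusedSectionVars false
set_option maxHeartbeats 1000000

open Finset Matrix

noncomputable section AbsorbAuxSection

namespace AbsorbAux

variable {L : Type*} [Field L] [Fintype L] [DecidableEq L] {n : ℕ}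

/-- least index where `v` is nonzero -/
def lead (v : Fin n → L) (hv : v ≠ 0) : Fin n :=
  (univ.filter fun j => v j ≠ 0).min' (by
    obtain ⟨j, hj⟩ := Function.ne_iff.mp hv
    exact ⟨j, mem_filter.mpr ⟨mem_univ _, by simpa using hj⟩⟩)

lemma lead_spec (v : Fin n → L) (hv : v ≠ 0) : v (lead v hv) ≠ 0 := by
  have := (univ.filter fun j => v j ≠ 0).min'_mem (by
    obtain ⟨j, hj⟩ := Function.ne_iff.mp hv
    exact ⟨j, mem_filter.mpr ⟨mem_univ _, by simpa using hj⟩⟩)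
  exact (mem_filter.mp this).2

lemma lead_smul {c : L} (hc : c ≠ 0) (v : Fin n → L) (hv : v ≠ 0) (hcv : c • v ≠ 0) :
    lead (c • v) hcv = lead v hv := by
  have h : (univ.filter fun j => (c • v) j ≠ 0) = (univ.filter fun j => v j ≠ 0) := by
    ext j; simp [hc]
  simp only [lead]
  congr 1

/-- representatives of lines: first nonzero coordinate equals 1 -/
def PP (L : Type*) [Field L] [Fintype L] [DecidableEq L] (n : ℕ) : Finset (Fin n → L) :=
  univ.filter (fun v => if h : v = 0 then False else v (lead v h) = 1)

lemma mem_PP_iff {v : Fin n → L} : v ∈ PP L n ↔ ∃ h : v ≠ 0, v (lead v h) = 1 := by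
  unfold PP
  rw [mem_filter]
  simp only [mem_univ, true_and]
  by_cases h : v = 0
  · simp [h]
  · simp [h]

lemma PP_ne_zero {v : Fin n → L} (hv : v ∈ PP L n) : v ≠ 0 := (mem_PP_iff.mp hv).1

lemma norm_mem (w : Fin n → L) (hw : w ≠ 0) : (w (lead w hw))⁻¹ • w ∈ PP L n := by
  have hc : (w (lead w hw))⁻¹ ≠ 0 := inv_ne_zero (lead_spec w hw)
  have hne : (w (lead w hw))⁻¹ • w ≠ 0 := smul_ne_zero hc hw
  rw [mem_PP_iff]
  refine ⟨hne, ?_⟩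
  rw [lead_smul hc w hw hne]
  simp [inv_mul_cancel₀ (lead_spec w hw)]

lemma factor_unique {w : Fin n → L} {c : L} {v : Fin n → L} (hc : c ≠ 0) (hv : v ∈ PP L n)
    (hw : w = c • v) :
    ∃ hw0 : w ≠ 0, c = w (lead w hw0) ∧ v = (w (lead w hw0))⁻¹ • w := by
  obtain ⟨hv0, hv1⟩ := mem_PP_iff.mp hv
  have hw0 : w ≠ 0 := hw ▸ smul_ne_zero hc hv0
  have hl : lead w hw0 = lead v hv0 := by
    subst hw; exact lead_smul hc v hv0 hw0
  have hwl : w (lead w hw0) = c := by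
    rw [hl, hw]; simp [hv1]
  refine ⟨hw0, hwl.symm, ?_⟩
  rw [hwl, hw, smul_smul, inv_mul_cancel₀ hc, one_smul]

/-- orbit count for scale-invariant predicates -/
lemma card_orbit (p : (Fin n → L) → Prop) [DecidablePred p]
    (hp : ∀ c : L, c ≠ 0 → ∀ v, p v → p (c • v)) :
    (Fintype.card L - 1) * ((PP L n).filter p).card
      = (univ.filter fun v : Fin n → L => p v ∧ v ≠ 0).card := by
  have hcard : ((univ.filter fun c : L => c ≠ 0) ×ˢ ((PP L n).filter p)).card
      = (Fintype.card L - 1) * ((PP L n).filter p).card := by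
    rw [Finset.card_product]
    congr 1
    have h0 : (univ.filter fun c : L => c ≠ 0) = univ.erase 0 := by
      ext c; simp [eq_comm, ne_comm]
    rw [h0, card_erase_of_mem (mem_univ _), card_univ]
  rw [← hcard]
  apply Finset.card_nbij' (fun cv => cv.1 • cv.2)
    (fun w => if h : w = 0 then (1, 0) else (w (lead w h), (w (lead w h))⁻¹ • w))
  · intro cv hcv
    rw [Finset.mem_coe, Finset.mem_product] at hcv
    obtain ⟨h1, h2⟩ := hcv
    have hc : cv.1 ≠ 0 := by simpa using (mem_filter.mp h1).2
    have hv := mem_filter.mp h2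
    exact mem_filter.mpr ⟨mem_univ _, hp _ hc _ hv.2, smul_ne_zero hc (PP_ne_zero hv.1)⟩
  · intro w hw
    have hw' := mem_filter.mp hw
    have hw0 : w ≠ 0 := hw'.2.2
    simp only [Finset.mem_coe]; rw [dif_neg hw0, Finset.mem_product]
    constructor
    · simpa using lead_spec w hw0
    · exact mem_filter.mpr ⟨norm_mem w hw0, hp _ (inv_ne_zero (lead_spec w hw0)) w hw'.2.1⟩
  · intro cv hcv
    rw [Finset.mem_coe, Finset.mem_product] at hcv
    have hc : cv.1 ≠ 0 := by simpa using (mem_filter.mp hcv.1).2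
    have hv := (mem_filter.mp hcv.2).1
    obtain ⟨hw0, h1, h2⟩ := factor_unique hc hv (rfl : cv.1 • cv.2 = cv.1 • cv.2)
    beta_reduce; rw [dif_neg hw0]
    exact Prod.ext h1.symm h2.symm
  · intro w hw
    have hw0 : w ≠ 0 := (mem_filter.mp hw).2.2
    beta_reduce; rw [dif_neg hw0]
    simp [smul_smul, mul_inv_cancel₀ (lead_spec w hw0)]


lemma card_dot_fiber_eq (z : Fin n → L) (hz : z ≠ 0) (e : Fin n → L) (he : e ⬝ᵥ z = 1) (c : L) :
    (univ.filter fun v : Fin n → L => v ⬝ᵥ z = c).card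
      = (univ.filter fun v : Fin n → L => v ⬝ᵥ z = 0).card := by
  apply Finset.card_nbij' (fun v => v - c • e) (fun v => v + c • e)
  · intro v hv
    have : v ⬝ᵥ z = c := by simpa using hv
    simp [sub_dotProduct, smul_dotProduct, this, he]
  · intro v hv
    have : v ⬝ᵥ z = 0 := by simpa using hv
    simp [add_dotProduct, smul_dotProduct, this, he]
  · intro v _; simp
  · intro v _; simp

lemma card_dot_fiber (z : Fin n → L) (hz : z ≠ 0) (c : L) :
    (univ.filter fun v : Fin n → L => v ⬝ᵥ z = c).card = Fintype.card L ^ (n - 1) := by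
  have hn : n ≠ 0 := by
    rintro rfl
    exact hz (Subsingleton.elim _ _)
  obtain ⟨k, rfl⟩ : ∃ k, n = k + 1 := ⟨n - 1, (Nat.succ_pred_eq_of_pos (Nat.pos_of_ne_zero hn)).symm⟩
  -- an element with e ⬝ᵥ z = 1
  set j₀ := (univ.filter fun j => z j ≠ 0).min' (by
    obtain ⟨j, hj⟩ := Function.ne_iff.mp hz
    exact ⟨j, mem_filter.mpr ⟨mem_univ _, by simpa using hj⟩⟩) with hj₀
  have hzj : z j₀ ≠ 0 := by
    have := (univ.filter fun j => z j ≠ 0).min'_mem (by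
      obtain ⟨j, hj⟩ := Function.ne_iff.mp hz
      exact ⟨j, mem_filter.mpr ⟨mem_univ _, by simpa using hj⟩⟩)
    exact (mem_filter.mp this).2
  have he : ((z j₀)⁻¹ • (Pi.single j₀ (1 : L) : Fin (k+1) → L)) ⬝ᵥ z = 1 := by
    rw [smul_dotProduct, single_dotProduct]
    simp [inv_mul_cancel₀ hzj]
  -- partition univ by the value of v ⬝ᵥ z
  have hpart : (Fintype.card (Fin (k+1) → L))
      = ∑ c : L, (univ.filter fun v : Fin (k+1) → L => v ⬝ᵥ z = c).card := by
    rw [← card_univ]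
    exact Finset.card_eq_sum_card_fiberwise (fun v _ => mem_univ (v ⬝ᵥ z))
  have hconst : ∀ c : L, (univ.filter fun v : Fin (k+1) → L => v ⬝ᵥ z = c).card
      = (univ.filter fun v : Fin (k+1) → L => v ⬝ᵥ z = 0).card :=
    fun c => card_dot_fiber_eq z hz _ he c
  rw [Finset.sum_congr rfl (fun c _ => hconst c), Finset.sum_const, card_univ, smul_eq_mul,
    Fintype.card_fun, Fintype.card_fin] at hpart
  have : Fintype.card L ^ (k + 1) = Fintype.card L * Fintype.card L ^ k := by ring
  rw [this] at hpart
  have hq : 0 < Fintype.card L := Fintype.card_pos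
  have := Nat.eq_of_mul_eq_mul_left hq hpart
  rw [hconst c, ← this]
  simp


/-- scaled count of representatives in a hyperplane -/
lemma cardP_dot (z : Fin n → L) :
    (Fintype.card L - 1) * ((PP L n).filter fun v => v ⬝ᵥ z = 0).card + 1
      = (univ.filter fun v : Fin n → L => v ⬝ᵥ z = 0).card := by
  rw [card_orbit (fun v => v ⬝ᵥ z = 0)
    (fun c hc v hv => by
      show (c • v) ⬝ᵥ z = 0
      rw [smul_dotProduct, show v ⬝ᵥ z = 0 from hv, smul_zero])]
  have h1 : (univ.filter fun v : Fin n → L => v ⬝ᵥ z = 0 ∧ v ≠ 0)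
      = (univ.filter fun v : Fin n → L => v ⬝ᵥ z = 0).erase 0 := by
    ext v
    simp only [mem_filter, mem_univ, true_and, mem_erase]
    tauto
  have h0 : (0 : Fin n → L) ∈ (univ.filter fun v : Fin n → L => v ⬝ᵥ z = 0) := by
    simp [zero_dotProduct]
  rw [h1, card_erase_of_mem h0]
  have : 0 < (univ.filter fun v : Fin n → L => v ⬝ᵥ z = 0).card :=
    Finset.card_pos.mpr ⟨0, h0⟩
  omega

lemma card_filter_dot_zero (z : Fin n → L) :
    ((univ.filter fun v : Fin n → L => v ⬝ᵥ z = 0).card : ℤ)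
      = if z = 0 then (Fintype.card L : ℤ) ^ n else (Fintype.card L : ℤ) ^ (n - 1) := by
  split_ifs with hz
  · subst hz
    have : (univ.filter fun v : Fin n → L => v ⬝ᵥ (0 : Fin n → L) = 0) = univ := by
      ext v; simp [dotProduct_zero]
    rw [this, card_univ, Fintype.card_fun, Fintype.card_fin]
    push_cast; ring
  · rw [card_dot_fiber z hz 0]; push_cast; ring

/-- The crux scalar identity. -/
lemma crux {R : Type*} [CommRing R] (x w : Fin n → L) :
    ∑ v ∈ PP L n, (if v ⬝ᵥ x = 0 then (0 : R) else
        ((if v ⬝ᵥ w = v ⬝ᵥ x then 1 else 0) - (if v ⬝ᵥ w = 0 then 1 else 0)))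
      = (Fintype.card L : R) ^ (n - 1) *
        ((if w = x then 1 else 0) - (if w = 0 then 1 else 0)) := by
  classical
  have hsummand : ∀ v : Fin n → L,
      (if v ⬝ᵥ x = 0 then (0 : R) else
        ((if v ⬝ᵥ w = v ⬝ᵥ x then 1 else 0) - (if v ⬝ᵥ w = 0 then 1 else 0)))
      = (if ¬ v ⬝ᵥ x = 0 ∧ v ⬝ᵥ w = v ⬝ᵥ x then (1:R) else 0)
        - (if ¬ v ⬝ᵥ x = 0 ∧ v ⬝ᵥ w = 0 then (1:R) else 0) := by
    intro v
    by_cases h1 : v ⬝ᵥ x = 0 <;> by_cases h2 : v ⬝ᵥ w = v ⬝ᵥ x <;>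
      by_cases h3 : v ⬝ᵥ w = 0 <;> simp [h1, h2, h3]
  rw [Finset.sum_congr rfl (fun v _ => hsummand v), Finset.sum_sub_distrib,
    Finset.sum_boole, Finset.sum_boole]
  have hsp : ∀ z : Fin n → L,
      ((PP L n).filter fun v => v ⬝ᵥ z = 0).card
      = ((PP L n).filter fun v => ¬ v ⬝ᵥ x = 0 ∧ v ⬝ᵥ z = 0).card
        + ((PP L n).filter fun v => v ⬝ᵥ z = 0 ∧ v ⬝ᵥ x = 0).card := by
    intro z
    have e1 : ((PP L n).filter fun v => v ⬝ᵥ z = 0)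
        = ((PP L n).filter fun v => ¬ v ⬝ᵥ x = 0 ∧ v ⬝ᵥ z = 0)
          ∪ ((PP L n).filter fun v => v ⬝ᵥ z = 0 ∧ v ⬝ᵥ x = 0) := by
      ext v
      simp only [mem_filter, mem_union]
      constructor
      · rintro ⟨hv, heq⟩
        by_cases hx0 : v ⬝ᵥ x = 0
        · exact Or.inr ⟨hv, heq, hx0⟩
        · exact Or.inl ⟨hv, hx0, heq⟩
      · rintro (⟨hv, _, heq⟩ | ⟨hv, hw0, _⟩)
        · exact ⟨hv, heq⟩
        · exact ⟨hv, hw0⟩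
    rw [e1, Finset.card_union_of_disjoint]
    rw [Finset.disjoint_filter]
    rintro v _ ⟨hx0, _⟩ ⟨_, hx0'⟩
    exact hx0 hx0'
  -- a-side : condition v⬝ᵥw = v⬝ᵥx is the same as v ⬝ᵥ (w - x) = 0
  have hacond : ((PP L n).filter fun v => ¬ v ⬝ᵥ x = 0 ∧ v ⬝ᵥ w = v ⬝ᵥ x)
      = ((PP L n).filter fun v => ¬ v ⬝ᵥ x = 0 ∧ v ⬝ᵥ (w - x) = 0) := by
    apply Finset.filter_congr
    intro v _
    rw [dotProduct_sub, sub_eq_zero]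
  have hgamcond : ((PP L n).filter fun v => v ⬝ᵥ (w - x) = 0 ∧ v ⬝ᵥ x = 0)
      = ((PP L n).filter fun v => v ⬝ᵥ w = 0 ∧ v ⬝ᵥ x = 0) := by
    apply Finset.filter_congr
    intro v _
    rw [dotProduct_sub, sub_eq_zero]
    constructor
    · rintro ⟨h1, h2⟩; exact ⟨by rw [h1, h2], h2⟩
    · rintro ⟨h1, h2⟩; exact ⟨by rw [h1, h2], h2⟩
  have hsp1 := hsp (w - x)
  rw [hgamcond] at hsp1
  have hsp2 := hsp w
  -- abbreviations (ℕ)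
  have hq2 : 2 ≤ Fintype.card L := Fintype.one_lt_card
  have hkey : ∀ z : Fin n → L,
      ((Fintype.card L : ℤ) - 1) * (((PP L n).filter fun v => v ⬝ᵥ z = 0).card : ℤ) + 1
      = if z = 0 then (Fintype.card L : ℤ) ^ n else (Fintype.card L : ℤ) ^ (n - 1) := by
    intro z
    rw [← card_filter_dot_zero]
    have h1 := cardP_dot (L := L) z
    have hcast : (((Fintype.card L - 1) * ((PP L n).filter fun v => v ⬝ᵥ z = 0).card + 1 : ℕ) : ℤ)
        = (((univ.filter fun v : Fin n → L => v ⬝ᵥ z = 0).card : ℕ) : ℤ) := by exact_mod_cast h1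
    push_cast at hcast
    rw [← hcast]
    have h2 : ((Fintype.card L - 1 : ℕ) : ℤ) = (Fintype.card L : ℤ) - 1 := by
      omega
    rw [h2]
  have hcastR : ∀ p q : ℕ, p = q → (p : R) = (q : R) := fun p q h => by rw [h]
  by_cases hx : x = 0
  · subst hx
    simp [dotProduct_zero]
  · rw [hacond]
    have h1R := hcastR _ _ hsp1
    have h2R := hcastR _ _ hsp2
    push_cast at h1R h2R
    have hn : n ≠ 0 := fun h => hx (by subst h; exact Subsingleton.elim _ _)
    have hn1 : n - 1 + 1 = n := by omega
    have hq2 : 2 ≤ Fintype.card L := Fintype.one_lt_card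
    have hpow : ((Fintype.card L : ℤ) - 1) * (Fintype.card L : ℤ) ^ (n - 1)
        = (Fintype.card L : ℤ) ^ n - (Fintype.card L : ℤ) ^ (n-1) := by
      calc ((Fintype.card L : ℤ) - 1) * (Fintype.card L : ℤ) ^ (n - 1)
          = (Fintype.card L : ℤ) ^ (n-1) * (Fintype.card L : ℤ) - (Fintype.card L : ℤ) ^ (n-1) := by
            ring
        _ = (Fintype.card L : ℤ) ^ (n-1+1) - (Fintype.card L : ℤ) ^ (n-1) := by rw [pow_succ]
        _ = _ := by rw [hn1]
    have hq0 : (Fintype.card L : ℤ) - 1 ≠ 0 := by omega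
    have hFdiff : ((((PP L n).filter fun v => v ⬝ᵥ (w - x) = 0).card : R))
        - ((((PP L n).filter fun v => v ⬝ᵥ w = 0).card : R))
        = (Fintype.card L : R) ^ (n - 1) *
          ((if w = x then 1 else 0) - (if w = 0 then 1 else 0)) := by
      by_cases hwx : w = x
      · have hA := hkey (w - x)
        rw [if_pos (sub_eq_zero_of_eq hwx)] at hA
        have hB := hkey w
        rw [if_neg (by rw [hwx]; exact hx)] at hB
        have hab : (((PP L n).filter fun v => v ⬝ᵥ (w-x) = 0).card : ℤ)
            = (((PP L n).filter fun v => v ⬝ᵥ w = 0).card : ℤ) + (Fintype.card L : ℤ) ^ (n-1) := by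
          apply mul_left_cancel₀ hq0
          rw [mul_add, hpow]
          omega
        have habN : (((PP L n).filter fun v => v ⬝ᵥ (w-x) = 0).card : ℕ)
            = (((PP L n).filter fun v => v ⬝ᵥ w = 0).card : ℕ) + Fintype.card L ^ (n-1) := by
          exact_mod_cast hab
        have := hcastR _ _ habN
        push_cast at this
        rw [this, if_pos hwx, if_neg (by rw [hwx]; exact hx)]
        ring
      · by_cases hw0 : w = 0
        · have hA := hkey (w - x)
          rw [if_neg (sub_ne_zero_of_ne hwx)] at hA
          have hB := hkey w
          rw [if_pos hw0] at hB
          have hab : (((PP L n).filter fun v => v ⬝ᵥ w = 0).card : ℤ)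
              = (((PP L n).filter fun v => v ⬝ᵥ (w-x) = 0).card : ℤ) + (Fintype.card L : ℤ) ^ (n-1) := by
            apply mul_left_cancel₀ hq0
            rw [mul_add, hpow]
            omega
          have habN : (((PP L n).filter fun v => v ⬝ᵥ w = 0).card : ℕ)
              = (((PP L n).filter fun v => v ⬝ᵥ (w-x) = 0).card : ℕ) + Fintype.card L ^ (n-1) := by
            exact_mod_cast hab
          have := hcastR _ _ habN
          push_cast at this
          rw [this, if_neg (fun h => hwx h), if_pos hw0]
          ring
        · have hA := hkey (w - x)
          rw [if_neg (sub_ne_zero_of_ne hwx)] at hA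
          have hB := hkey w
          rw [if_neg hw0] at hB
          have hab : (((PP L n).filter fun v => v ⬝ᵥ (w-x) = 0).card : ℤ)
              = (((PP L n).filter fun v => v ⬝ᵥ w = 0).card : ℤ) := by
            apply mul_left_cancel₀ hq0
            omega
          have habN : (((PP L n).filter fun v => v ⬝ᵥ (w-x) = 0).card : ℕ)
              = (((PP L n).filter fun v => v ⬝ᵥ w = 0).card : ℕ) := by
            exact_mod_cast hab
          have := hcastR _ _ habN
          push_cast at this
          rw [this, if_neg hwx, if_neg hw0]
          ring
    linear_combination hFdiff - h1R + h2R

lemma card_dot_fiber' (z : Fin n → L) (hz : z ≠ 0) (c : L) :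
    (univ.filter fun u : Fin n → L => z ⬝ᵥ u = c).card = Fintype.card L ^ (n - 1) := by
  have h : (univ.filter fun u : Fin n → L => z ⬝ᵥ u = c)
      = (univ.filter fun u : Fin n → L => u ⬝ᵥ z = c) := by
    ext u
    simp [dotProduct_comm]
  rw [h, card_dot_fiber z hz c]

/-- The single-field master identity. -/
lemma identityA {R : Type*} [CommRing R] (F : (Fin n → L) → R) (x : Fin n → L) :
    ∑ v ∈ PP L n, ∑ u : Fin n → L,
      ((if v ⬝ᵥ u = 1 then (1:R) else 0) - (if v ⬝ᵥ u = 0 then 1 else 0)) * F ((v ⬝ᵥ x) • u)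
    = (Fintype.card L : R) ^ (n - 1) * (F x - F 0) := by
  classical
  have inner : ∀ v ∈ PP L n,
      (∑ u : Fin n → L,
        ((if v ⬝ᵥ u = 1 then (1:R) else 0) - (if v ⬝ᵥ u = 0 then 1 else 0)) * F ((v ⬝ᵥ x) • u))
      = ∑ w : Fin n → L,
        (if v ⬝ᵥ x = 0 then (0:R) else
          ((if v ⬝ᵥ w = v ⬝ᵥ x then 1 else 0) - (if v ⬝ᵥ w = 0 then 1 else 0))) * F w := by
    intro v hv
    have hv0 : v ≠ 0 := PP_ne_zero hv
    by_cases hs : v ⬝ᵥ x = 0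
    · rw [hs]
      simp only [zero_smul, if_pos rfl]
      rw [← Finset.sum_mul]
      have : (∑ u : Fin n → L,
          ((if v ⬝ᵥ u = 1 then (1:R) else 0) - (if v ⬝ᵥ u = 0 then 1 else 0))) = 0 := by
        rw [Finset.sum_sub_distrib, Finset.sum_boole, Finset.sum_boole,
          card_dot_fiber' v hv0 1, card_dot_fiber' v hv0 0]
        ring
      rw [this]
      simp
    · set s := v ⬝ᵥ x with hsdef
      have hsne : s ≠ 0 := hs
      let e : (Fin n → L) ≃ (Fin n → L) :=
        ⟨fun w => s⁻¹ • w, fun w => s • w, fun w => by simp [smul_smul, mul_inv_cancel₀ hsne],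
          fun w => by simp [smul_smul, inv_mul_cancel₀ hsne]⟩
      rw [← Equiv.sum_comp e (fun u =>
        ((if v ⬝ᵥ u = 1 then (1:R) else 0) - (if v ⬝ᵥ u = 0 then 1 else 0)) * F (s • u))]
      apply Finset.sum_congr rfl
      intro w _
      have he : e w = s⁻¹ • w := rfl
      rw [he]
      have h1 : s • s⁻¹ • w = w := by simp [smul_smul, mul_inv_cancel₀ hsne]
      rw [h1]
      have hdot : v ⬝ᵥ (s⁻¹ • w) = s⁻¹ * (v ⬝ᵥ w) := by
        rw [dotProduct_smul]
        simp
      rw [if_neg hs, hdot]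
      congr 2
      · apply if_congr _ rfl rfl
        constructor
        · intro h
          have := congrArg (fun t => s * t) h
          simpa [← mul_assoc, mul_inv_cancel₀ hsne] using this
        · intro h
          rw [h, inv_mul_cancel₀ hsne]
      · apply if_congr _ rfl rfl
        rw [mul_eq_zero]
        simp [inv_ne_zero hsne]
  rw [Finset.sum_congr rfl inner, Finset.sum_comm]
  have hcol : ∀ w : Fin n → L,
      (∑ v ∈ PP L n,
        (if v ⬝ᵥ x = 0 then (0:R) else
          ((if v ⬝ᵥ w = v ⬝ᵥ x then 1 else 0) - (if v ⬝ᵥ w = 0 then 1 else 0))) * F w)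
      = (Fintype.card L : R) ^ (n - 1) *
          ((if w = x then F w else 0) - (if w = 0 then F w else 0)) := by
    intro w
    rw [← Finset.sum_mul, crux x w]
    split_ifs <;> ring
  rw [Finset.sum_congr rfl (fun w _ => hcol w), ← Finset.mul_sum]
  rw [Finset.sum_sub_distrib, Finset.sum_ite_eq' univ x F, Finset.sum_ite_eq' univ 0 F]
  simp


end AbsorbAux
end AbsorbAuxSection

open AbsorbAux

/-- every member of `C` that is `0`-absorbing in some `I ⊆ [m]` lies in
the linearly closed clonoid generated by the unary part `C^[1]`. -/
theorem absorbing_mem_clg_unary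
    {m : ℕ} (K : Fin m → Type*) [∀ i, Field (K i)] [∀ i, Fintype (K i)]
    (Fp : Type*) [Field Fp] [Fintype Fp]
    (hcop : Nat.Coprime (∏ i, Fintype.card (K i)) (Fintype.card Fp))
    (C : ∀ n : ℕ, Set ((∀ i, Fin n → K i) → Fp)) (hC : IsLCC K Fp C)
    (I : Finset (Fin m)) {n : ℕ}
    (f : (∀ i, Fin n → K i) → Fp) (hf : f ∈ C n)
    (hdep : ∀ x : ∀ i, Fin n → K i, f x = f (fun i => if i ∈ I then x i else 0))
    (habs : ∀ x : ∀ i, Fin n → K i, (∃ j ∈ I, x j = 0) → f x = 0) :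
    f ∈ ClgU K Fp (C 1) n := by
  classical
  intro C' hC' hsub
  obtain ⟨hne, hlin, hsubst⟩ := hC'
  letI : ∀ i, DecidableEq (K i) := fun i => Classical.decEq _
  -- the cardinality of each `K i` is invertible in `Fp`
  have hqF : ∀ i : Fin m, (Fintype.card (K i) : Fp) ≠ 0 := by
    intro i hzero
    have hchar : ringChar Fp ∣ Fintype.card (K i) :=
      (CharP.cast_eq_zero_iff Fp (ringChar Fp) _).mp hzero
    have hcard : ringChar Fp ∣ Fintype.card Fp :=
      (CharP.cast_eq_zero_iff Fp (ringChar Fp) _).mp (Nat.cast_card_eq_zero Fp)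
    have hdvdprod : ringChar Fp ∣ ∏ j, Fintype.card (K j) :=
      dvd_trans hchar (Finset.dvd_prod_of_mem _ (mem_univ i))
    have h1 : ringChar Fp ∣ Nat.gcd (∏ j, Fintype.card (K j)) (Fintype.card Fp) :=
      Nat.dvd_gcd hdvdprod hcard
    rw [hcop] at h1
    have h2 : ringChar Fp = 1 := Nat.dvd_one.mp h1
    have h3 : (1 : Fp) = 0 := by
      have := (CharP.cast_eq_zero_iff Fp (ringChar Fp) 1).mpr (by rw [h2])
      simpa using this
    exact one_ne_zero h3
  -- C' n as a submodule
  let SM : Submodule Fp ((∀ i, Fin n → K i) → Fp) :=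
    { carrier := C' n
      add_mem' := by
        intro g h hg hh
        have h1 := hlin n 1 1 g h hg hh
        have hEq : (fun x => 1 * g x + 1 * h x) = g + h := by funext x; simp
        rw [← hEq]
        exact h1
      zero_mem' := by
        obtain ⟨l, g₀, hg₀⟩ := hne
        have h₀ := hsubst l n g₀ hg₀ (fun i => 0)
        have h1 := hlin n 0 0 _ _ h₀ h₀
        have hEq : (fun x => 0 * (fun x : ∀ i, Fin n → K i =>
            g₀ fun i => ((0 : Matrix (Fin l) (Fin n) (K i))).mulVec (x i)) x
            + 0 * (fun x : ∀ i, Fin n → K i =>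
            g₀ fun i => ((0 : Matrix (Fin l) (Fin n) (K i))).mulVec (x i)) x)
            = (0 : (∀ i, Fin n → K i) → Fp) := by funext x; simp
        rw [← hEq]
        exact h1
      smul_mem' := by
        intro a g hg
        have h1 := hlin n a 0 g g hg hg
        have hEq : (fun x => a * g x + 0 * g x) = a • g := by
          funext x; simp
        rw [← hEq]
        exact h1 }
  -- the generator sets
  let Tf : Finset (Fin m) → Set ((∀ i, Fin n → K i) → Fp) := fun s =>
    {g | ∃ u v : ∀ i, Fin n → K i, g = fun x =>
      f (fun i => if i ∈ s then ((v i) ⬝ᵥ (x i)) • u i else if i ∈ I then x i else 0)}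
  -- the generators for s = I belong to C' n
  have hTC : Tf I ⊆ C' n := by
    rintro _ ⟨u, v, rfl⟩
    have h1 : (fun t : ∀ i, Fin 1 → K i =>
        f (fun i => (Matrix.of (fun j (_ : Fin 1) => if i ∈ I then u i j else 0) :
          Matrix (Fin n) (Fin 1) (K i)).mulVec (t i))) ∈ C 1 :=
      hC.2.2 n 1 f hf _
    have h2 := hsubst 1 n _ (hsub h1)
      (fun i => (Matrix.of (fun (_ : Fin 1) j => v i j) : Matrix (Fin 1) (Fin n) (K i)))
    have hEq : (fun x : ∀ i, Fin n → K i =>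
        f (fun i => (Matrix.of (fun j (_ : Fin 1) => if i ∈ I then u i j else 0) :
          Matrix (Fin n) (Fin 1) (K i)).mulVec
            ((Matrix.of (fun (_ : Fin 1) j => v i j) : Matrix (Fin 1) (Fin n) (K i)).mulVec (x i))))
        = fun x => f (fun i => if i ∈ I then ((v i) ⬝ᵥ (x i)) • u i
            else if i ∈ I then x i else 0) := by
      funext x
      congr 1
      funext i j
      simp only [Matrix.mulVec, dotProduct, Fin.sum_univ_one]
      by_cases hi : i ∈ I
      · simp [hi, dotProduct, mul_comm]
      · simp [hi]
    rw [← hEq]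
    exact h2
  -- main induction
  have main : ∀ s : Finset (Fin m), s ⊆ I → f ∈ Submodule.span Fp (Tf s) := by
    intro s
    induction s using Finset.induction_on with
    | empty =>
      intro _
      apply Submodule.subset_span
      refine ⟨(fun _ => 0), (fun _ => 0), ?_⟩
      funext x
      rw [hdep x]
      exact congrArg f (funext fun i => by simp)
    | @insert i₀ s hi₀ ih =>
      intro hins
      have hsI : s ⊆ I := fun a ha => hins (Finset.mem_insert_of_mem ha)
      have hi₀I : i₀ ∈ I := hins (Finset.mem_insert_self _ _)
      have hstep : Tf s ⊆ (Submodule.span Fp (Tf (insert i₀ s)) : Set _) := by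
        rintro _ ⟨u, v, rfl⟩
        have hqne : ((Fintype.card (K i₀) : Fp)) ^ (n-1) ≠ 0 := pow_ne_zero _ (hqF i₀)
        set FF : (Fin n → K i₀) → (Fin n → K i₀) → ((∀ i, Fin n → K i) → Fp) :=
          fun v₀ u₀ => fun x => f (fun i => if i ∈ insert i₀ s then
            ((Function.update v i₀ v₀ i) ⬝ᵥ (x i)) • (Function.update u i₀ u₀ i)
            else if i ∈ I then x i else 0) with hFF
        have hiden : ∀ x : ∀ i, Fin n → K i,
            ((Fintype.card (K i₀) : Fp)) ^ (n-1) *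
              f (fun i => if i ∈ s then ((v i) ⬝ᵥ (x i)) • u i else if i ∈ I then x i else 0)
            = ∑ v₀ ∈ PP (K i₀) n, ∑ u₀ : Fin n → K i₀,
              ((if v₀ ⬝ᵥ u₀ = 1 then (1:Fp) else 0) - (if v₀ ⬝ᵥ u₀ = 0 then 1 else 0)) *
                FF v₀ u₀ x := by
          intro x
          set G : (Fin n → K i₀) → Fp := fun w =>
            f (fun i => if i ∈ s then ((v i) ⬝ᵥ ((Function.update x i₀ w) i)) • u i
              else if i ∈ I then (Function.update x i₀ w) i else 0) with hG
          have hA := identityA (R := Fp) G (x i₀)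
          have e1 : G (x i₀)
              = f (fun i => if i ∈ s then ((v i) ⬝ᵥ (x i)) • u i
                  else if i ∈ I then x i else 0) := by
            rw [hG]
            simp only [Function.update_eq_self]
          have e2 : G 0 = 0 := by
            rw [hG]
            apply habs
            refine ⟨i₀, hi₀I, ?_⟩
            simp [hi₀, hi₀I]
          have e3 : ∀ (v₀ u₀ : Fin n → K i₀), G ((v₀ ⬝ᵥ (x i₀)) • u₀) = FF v₀ u₀ x := by
            intro v₀ u₀
            rw [hG, hFF]
            beta_reduce
            congr 1
            funext i
            by_cases hii : i = i₀
            · subst hii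
              simp [hi₀, hi₀I, Finset.mem_insert]
            · simp [Function.update_of_ne hii, Finset.mem_insert, hii]
          rw [e1, e2, sub_zero] at hA
          rw [← hA]
          exact Finset.sum_congr rfl (fun v₀ _ => Finset.sum_congr rfl (fun u₀ _ => by rw [e3]))
        have hgfun : (fun x => f (fun i => if i ∈ s then ((v i) ⬝ᵥ (x i)) • u i
              else if i ∈ I then x i else 0))
            = (((Fintype.card (K i₀) : Fp)) ^ (n-1))⁻¹ •
              ∑ v₀ ∈ PP (K i₀) n, ∑ u₀ : Fin n → K i₀,
                (((if v₀ ⬝ᵥ u₀ = 1 then (1:Fp) else 0)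
                  - (if v₀ ⬝ᵥ u₀ = 0 then 1 else 0))) • FF v₀ u₀ := by
          funext x
          simp only [Pi.smul_apply, Finset.sum_apply, smul_eq_mul]
          rw [← hiden x, inv_mul_cancel_left₀ hqne]
        rw [hgfun]
        exact Submodule.smul_mem _ _ (Submodule.sum_mem _ (fun v₀ _ =>
          Submodule.sum_mem _ (fun u₀ _ => Submodule.smul_mem _ _
            (Submodule.subset_span
              ⟨Function.update u i₀ u₀, Function.update v i₀ v₀, by rw [hFF]⟩))))
      exact Submodule.span_le.mpr hstep (ih hsI)
  have hfinal := main I (subset_refl I)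
  have hle : Submodule.span Fp (Tf I) ≤ SM := Submodule.span_le.mpr hTC
  exact hle hfinal
end

section
/- Let q₁,…,qₘ, p be prime powers with ∏ᵢ qᵢ coprime to p and K = ∏ᵢ F_{qᵢ}. Then every (F_p, K)-linearly closed clonoid C is generated by its unary functions: C = Clg(C^[1]). -/
open Finset
set_option linter.unusedSectionVars false

section Fibers
variable {Fp : Type*} [Field Fp]

lemma sum_fiber {V κ : Type*} [Fintype V] [Fintype κ] [DecidableEq κ]
    (φ : V → κ) (F : κ → Fp) :
    ∑ b, F (φ b) = ∑ p, ((univ.filter fun b => φ b = p).card : Fp) * F p := by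
  rw [← Finset.sum_fiberwise_of_maps_to (g := φ) (fun b _ => mem_univ (φ b))
    (f := fun b => F (φ b))]
  refine Finset.sum_congr rfl fun p _ => ?_
  rw [Finset.sum_congr rfl (fun b hb => show F (φ b) = F p by
      simp only [mem_filter] at hb; rw [hb.2]), Finset.sum_const, nsmul_eq_mul]

lemma card_fiber_eq_of_add {V κ : Type*} [Fintype V] [AddCommGroup V] [AddCommGroup κ]
    [DecidableEq κ] (φ : V → κ) (hadd : ∀ b c, φ (b + c) = φ b + φ c)
    (hsurj : Function.Surjective φ) (u v : κ) :
    (univ.filter fun b => φ b = u).card = (univ.filter fun b => φ b = v).card := by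
  obtain ⟨d, hd⟩ := hsurj (v - u)
  have hsub : ∀ b c : V, φ (b - c) = φ b - φ c := by
    intro b c
    have := hadd (b - c) c
    simp only [sub_add_cancel] at this
    rw [this]; abel
  refine Finset.card_bij' (fun b _ => b + d) (fun b _ => b - d) ?_ ?_ ?_ ?_
  · intro b hb; simp only [mem_filter, mem_univ, true_and] at hb ⊢
    rw [hadd, hb, hd]; abel
  · intro b hb; simp only [mem_filter, mem_univ, true_and] at hb ⊢
    rw [hsub, hb, hd]; abel
  · intro b _; simp
  · intro b _; simp
end Fibers
section SingleSort
variable {k : Type*} [Field k] [Fintype k] [DecidableEq k]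

/-- dot product -/
def pdot {n : ℕ} (a b : Fin n → k) : k := ∑ l, a l * b l

lemma pdot_comm {n : ℕ} (a b : Fin n → k) : pdot a b = pdot b a := by
  unfold pdot; exact Finset.sum_congr rfl fun l _ => mul_comm _ _

lemma pdot_add_right {n : ℕ} (a b c : Fin n → k) :
    pdot a (b + c) = pdot a b + pdot a c := by
  unfold pdot; rw [← Finset.sum_add_distrib]
  exact Finset.sum_congr rfl fun l _ => by simp [mul_add]

lemma pdot_smul_right {n : ℕ} (a : Fin n → k) (t : k) (b : Fin n → k) :
    pdot a (t • b) = t * pdot a b := by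
  unfold pdot; rw [Finset.mul_sum]
  exact Finset.sum_congr rfl fun l _ => by simp [Pi.smul_apply, smul_eq_mul]; ring

lemma pdot_single {n : ℕ} (a : Fin n → k) (j : Fin n) (c : k) :
    pdot a (Pi.single j c) = a j * c := by
  unfold pdot
  rw [Finset.sum_eq_single j]
  · simp
  · intro l _ hl; simp [Pi.single_eq_of_ne hl]
  · simp

/-- the projective Setoid -/
def psetoid (k : Type*) [Field k] (n : ℕ) : Setoid (Fin n → k) where
  r v w := ∃ t : k, t ≠ 0 ∧ w = t • v
  iseqv := by
    refine ⟨fun v => ⟨1, one_ne_zero, (one_smul _ _).symm⟩, ?_, ?_⟩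
    · rintro v w ⟨t, ht, rfl⟩
      exact ⟨t⁻¹, inv_ne_zero ht, by rw [smul_smul, inv_mul_cancel₀ ht, one_smul]⟩
    · rintro u v w ⟨t, ht, rfl⟩ ⟨s, hs, rfl⟩
      exact ⟨s * t, mul_ne_zero hs ht, by rw [smul_smul]⟩

noncomputable def prep {n : ℕ} (v : Fin n → k) : Fin n → k :=
  (Quotient.mk (psetoid k n) v).out

lemma prep_spec {n : ℕ} (v : Fin n → k) : ∃ t : k, t ≠ 0 ∧ v = t • prep v := by
  have h : Quotient.mk (psetoid k n) (prep v) = Quotient.mk (psetoid k n) v :=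
    Quotient.out_eq _
  exact Quotient.exact h

lemma prep_congr {n : ℕ} {v w : Fin n → k} (t : k) (ht : t ≠ 0) (h : w = t • v) :
    prep v = prep w := congrArg Quotient.out (Quotient.sound ⟨t, ht, h⟩)

/-- line representatives -/
noncomputable def pL (k : Type*) [Field k] [Fintype k] [DecidableEq k] (n : ℕ) :
    Finset (Fin n → k) := (univ.image prep).erase 0

lemma prep_mem_pL {n : ℕ} {x : Fin n → k} (hx : x ≠ 0) : prep x ∈ pL k n := by
  refine Finset.mem_erase.2 ⟨?_, Finset.mem_image.2 ⟨x, mem_univ x, rfl⟩⟩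
  intro h0
  obtain ⟨t, ht, hv⟩ := prep_spec x
  rw [h0, smul_zero] at hv
  exact hx hv

lemma pL_ne_zero {n : ℕ} {a : Fin n → k} (ha : a ∈ pL k n) : a ≠ 0 :=
  Finset.ne_of_mem_erase ha

lemma pL_prep_eq {n : ℕ} {a : Fin n → k} (ha : a ∈ pL k n) : prep a = a := by
  obtain ⟨v, _, rfl⟩ := Finset.mem_image.1 (Finset.mem_of_mem_erase ha)
  obtain ⟨t, ht, hv⟩ := prep_spec v
  exact prep_congr t ht hv

lemma pL_eq_prep {n : ℕ} {a x : Fin n → k} (ha : a ∈ pL k n) (t : k) (ht : t ≠ 0)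
    (h : x = t • a) : a = prep x := by
  rw [← prep_congr t ht h, pL_prep_eq ha]

end SingleSort
section SingleSort2
variable {k : Type*} [Field k] [Fintype k] [DecidableEq k]

lemma pdot_sub_right {n : ℕ} (a b c : Fin n → k) :
    pdot a (b - c) = pdot a b - pdot a c := by
  unfold pdot; rw [← Finset.sum_sub_distrib]
  exact Finset.sum_congr rfl fun l _ => by simp [mul_sub]

lemma exists_coord {n : ℕ} {a : Fin n → k} (ha : a ≠ 0) : ∃ j, a j ≠ 0 := by
  by_contra h
  push_neg at h
  exact ha (funext fun j => h j)

lemma pdot_surj {n : ℕ} {a : Fin n → k} (ha : a ≠ 0) :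
    Function.Surjective (fun b => pdot a b) := by
  obtain ⟨j, hj⟩ := exists_coord ha
  intro u
  exact ⟨Pi.single j ((a j)⁻¹ * u), by
    simp only [pdot_single]
    field_simp⟩

lemma indep_exists {n : ℕ} {a x : Fin n → k} (ha : a ≠ 0) (hx : ∀ t : k, x ≠ t • a) :
    ∃ b₀, pdot a b₀ = 0 ∧ pdot x b₀ ≠ 0 := by
  obtain ⟨j, hj⟩ := exists_coord ha
  by_contra h
  push_neg at h
  apply hx ((a j)⁻¹ * x j)
  funext l
  have h1 : pdot a (a j • (Pi.single l 1 : Fin n → k) - a l • (Pi.single j 1 : Fin n → k)) = 0 := by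
    rw [pdot_sub_right, pdot_smul_right, pdot_smul_right, pdot_single, pdot_single]
    ring
  have h2 := h _ h1
  rw [pdot_sub_right, pdot_smul_right, pdot_smul_right, pdot_single, pdot_single,
    mul_one, mul_one, sub_eq_zero] at h2
  simp only [Pi.smul_apply, smul_eq_mul]
  field_simp
  linear_combination h2

lemma pair_surj {n : ℕ} {a x : Fin n → k} (ha : a ≠ 0) (hx : ∀ t : k, x ≠ t • a) :
    Function.Surjective (fun b => (pdot a b, pdot x b)) := by
  obtain ⟨b₂, hb₂⟩ := pdot_surj ha (1 : k)
  obtain ⟨b₀, hb₀a, hb₀x⟩ := indep_exists ha hx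
  rintro ⟨u, t⟩
  refine ⟨u • b₂ + ((t - u * pdot x b₂) * (pdot x b₀)⁻¹) • b₀, ?_⟩
  simp only [pdot_add_right, pdot_smul_right, hb₂, hb₀a, Prod.mk.injEq]
  constructor
  · ring
  · field_simp
    ring

lemma card_fiber_pdot {n : ℕ} {a : Fin (n + 1) → k} (ha : a ≠ 0) (u : k) :
    (univ.filter fun b => pdot a b = u).card = Fintype.card k ^ n := by
  have hequal : ∀ v : k, (univ.filter fun b => pdot a b = v).card
      = (univ.filter fun b => pdot a b = u).card := fun v =>
    card_fiber_eq_of_add (fun b => pdot a b) (fun b c => pdot_add_right a b c)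
      (pdot_surj ha) v u
  have hcard : (univ : Finset (Fin (n + 1) → k)).card
      = ∑ v : k, (univ.filter fun b => pdot a b = v).card :=
    Finset.card_eq_sum_card_fiberwise (fun b _ => mem_univ (pdot a b))
  rw [Finset.sum_congr rfl (fun v _ => hequal v), Finset.sum_const, smul_eq_mul,
    Finset.card_univ, Finset.card_univ, Fintype.card_fun, Fintype.card_fin] at hcard
  have hc : Fintype.card k * Fintype.card k ^ n
      = Fintype.card k * (univ.filter fun b => pdot a b = u).card := by
    rw [← hcard, pow_succ, mul_comm]
  exact (Nat.eq_of_mul_eq_mul_left Fintype.card_pos hc).symm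

end SingleSort2
section Core
variable {k : Type*} [Field k] [Fintype k] [DecidableEq k]
variable {Fp : Type*} [Field Fp]

noncomputable def pe0 (Fp : Type*) [Field Fp] {k : Type*} [Field k] [DecidableEq k]
    (u : k) : Fp := (if u = 1 then 1 else 0) - (if u = 0 then 1 else 0)

lemma pe0_sum : ∑ u : k, pe0 Fp u = 0 := by
  unfold pe0
  rw [Finset.sum_sub_distrib]
  simp [Finset.sum_ite_eq' univ]

lemma pdot_zero_right {n : ℕ} (b : Fin n → k) : pdot b 0 = 0 := by
  unfold pdot; simp

lemma sum_ite_one_mul (c : k) (h : k → Fp) :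
    ∑ u : k, (if u = c then (1:Fp) else 0) * h u = h c := by
  have h1 : ∀ u : k, (if u = c then (1:Fp) else 0) * h u = if u = c then h u else 0 := by
    intro u; split <;> simp
  rw [Finset.sum_congr rfl fun u _ => h1 u]
  simp [Finset.sum_ite_eq' univ]

lemma inner_indep {n : ℕ} {a x : Fin n → k} (ha : a ≠ 0) (hx : ∀ t : k, x ≠ t • a)
    (f : (Fin n → k) → Fp) :
    ∑ b, pe0 Fp (pdot a b) * f (fun j => a j * pdot b x) = 0 := by
  have hφ : ∀ b : Fin n → k, pe0 Fp (pdot a b) * f (fun j => a j * pdot b x)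
      = (fun p : k × k => pe0 Fp p.1 * f (fun j => a j * p.2)) ((pdot a b, pdot x b)) := by
    intro b; simp only [pdot_comm x b]
  rw [Finset.sum_congr rfl fun b _ => hφ b,
    sum_fiber (fun b => (pdot a b, pdot x b)) (fun p => pe0 Fp p.1 * f (fun j => a j * p.2))]
  have hcard : ∀ p : k × k, ((univ.filter fun b => (pdot a b, pdot x b) = p).card : Fp)
      = ((univ.filter fun b => (pdot a b, pdot x b) = (0, 0)).card : Fp) := fun p => by
    rw [card_fiber_eq_of_add (fun b => (pdot a b, pdot x b))
      (fun b c => by simp [pdot_add_right, Prod.ext_iff])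
      (pair_surj ha hx) p (0, 0)]
  rw [Finset.sum_congr rfl fun p _ => by rw [hcard p]]
  rw [← Finset.mul_sum]
  rw [Fintype.sum_prod_type]
  rw [Finset.sum_congr rfl fun u _ => (Finset.mul_sum univ (fun t => f (fun j => a j * t))
    (pe0 Fp u)).symm]
  rw [← Finset.sum_mul, pe0_sum, zero_mul, mul_zero]

lemma inner_x_zero {n : ℕ} {a : Fin (n + 1) → k} (ha : a ≠ 0)
    (f : (Fin (n + 1) → k) → Fp) :
    ∑ b, pe0 Fp (pdot a b) * f (fun j => a j * pdot b (0 : Fin (n + 1) → k)) = 0 := by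
  rw [Finset.sum_congr rfl fun b _ => by rw [pdot_zero_right]]
  rw [sum_fiber (fun b => pdot a b) (fun u => pe0 Fp u * f (fun j => a j * 0))]
  rw [Finset.sum_congr rfl fun u _ => by rw [card_fiber_pdot ha u]]
  rw [← Finset.mul_sum, ← Finset.sum_mul, pe0_sum, zero_mul, mul_zero]

lemma inner_parallel {n : ℕ} {a x : Fin (n + 1) → k} (ha : a ≠ 0) {t : k}
    (hxt : x = t • a) (f : (Fin (n + 1) → k) → Fp) :
    ∑ b, pe0 Fp (pdot a b) * f (fun j => a j * pdot b x)
      = ((Fintype.card k ^ n : ℕ) : Fp) * (f x - f 0) := by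
  have hbx : ∀ b : Fin (n + 1) → k, pdot b x = t * pdot a b := by
    intro b; rw [hxt, pdot_smul_right, pdot_comm]
  rw [Finset.sum_congr rfl fun b _ => by rw [hbx b]]
  rw [sum_fiber (fun b => pdot a b) (fun u => pe0 Fp u * f (fun j => a j * (t * u)))]
  rw [Finset.sum_congr rfl fun u _ => by rw [card_fiber_pdot ha u]]
  rw [← Finset.mul_sum]
  congr 1
  unfold pe0
  rw [Finset.sum_congr rfl fun u _ => sub_mul (if u = 1 then (1:Fp) else 0)
    (if u = 0 then (1:Fp) else 0) _, Finset.sum_sub_distrib,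
    sum_ite_one_mul 1 (fun u => f (fun j => a j * (t * u))),
    sum_ite_one_mul 0 (fun u => f (fun j => a j * (t * u)))]
  congr 2
  · funext j; rw [mul_one, hxt]; simp [mul_comm]
  · funext j; simp

lemma master {n : ℕ} (hq : ((Fintype.card k : ℕ) : Fp) ≠ 0)
    (f : (Fin (n + 1) → k) → Fp) (x : Fin (n + 1) → k) :
    f x = f 0 + ((Fintype.card k ^ n : ℕ) : Fp)⁻¹ *
      ∑ a ∈ pL k (n + 1), ∑ b, pe0 Fp (pdot a b) * f (fun j => a j * pdot b x) := by
  by_cases hx : x = 0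
  · subst hx
    rw [Finset.sum_congr rfl fun a ha => inner_x_zero (pL_ne_zero ha) f]
    simp
  · rw [Finset.sum_eq_single_of_mem (prep x) (prep_mem_pL hx)]
    · obtain ⟨t, ht, hxt⟩ := prep_spec x
      have hrne : prep x ≠ 0 := pL_ne_zero (prep_mem_pL hx)
      rw [inner_parallel hrne hxt f]
      have hqn : ((Fintype.card k ^ n : ℕ) : Fp) ≠ 0 := by
        rw [Nat.cast_pow]; exact pow_ne_zero n hq
      rw [← mul_assoc, inv_mul_cancel₀ hqn, one_mul, add_sub_cancel]
    · intro a haL hane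
      refine inner_indep (pL_ne_zero haL) (fun s hs => ?_) f
      have hs0 : s ≠ 0 := by rintro rfl; simp at hs; exact hx hs
      exact hane (pL_eq_prep haL s hs0 hs)

end Core
section Kernel
variable {k : Type*} [Field k] [Fintype k] [DecidableEq k]
variable {Fp : Type*} [Field Fp]

noncomputable def pker (Fp : Type*) [Field Fp] {k : Type*} [Field k] [Fintype k]
    [DecidableEq k] {n : ℕ} (ε : Fp) (a b : Fin n → k) : Fp :=
  (if a = 0 ∧ b = 0 then 1 else 0) + (if a ∈ pL k n then ε * pe0 Fp (pdot a b) else 0)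

lemma kernel_sum {n : ℕ} (hq : ((Fintype.card k : ℕ) : Fp) ≠ 0) (x y : Fin (n + 1) → k) :
    ∑ w : (Fin (n + 1) → k) × (Fin (n + 1) → k),
      pker Fp (((Fintype.card k ^ n : ℕ) : Fp)⁻¹) w.1 w.2 *
        (if (fun j => w.1 j * pdot w.2 x) = y then (1:Fp) else 0)
    = if x = y then 1 else 0 := by
  set δy : (Fin (n + 1) → k) → Fp := fun v => if v = y then 1 else 0 with hδy
  have hind : ∀ w : (Fin (n + 1) → k) × (Fin (n + 1) → k),
      (if (fun j => w.1 j * pdot w.2 x) = y then (1:Fp) else 0)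
        = δy (fun j => w.1 j * pdot w.2 x) := fun w => rfl
  unfold pker
  rw [Finset.sum_congr rfl fun w _ => by
    rw [hind w, add_mul]]
  rw [Finset.sum_add_distrib]
  have h1 : ∑ w : (Fin (n + 1) → k) × (Fin (n + 1) → k),
      (if w.1 = 0 ∧ w.2 = 0 then (1:Fp) else 0) * δy (fun j => w.1 j * pdot w.2 x)
      = δy 0 := by
    rw [Finset.sum_eq_single_of_mem ((0, 0) : (Fin (n + 1) → k) × (Fin (n + 1) → k))
      (mem_univ _)]
    · have hz : (fun j => (0 : Fin (n + 1) → k) j * pdot (0 : Fin (n + 1) → k) x)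
          = (0 : Fin (n + 1) → k) := by funext j; simp
      rw [if_pos ⟨rfl, rfl⟩, one_mul, hz]
    · intro w _ hw
      rw [if_neg, zero_mul]
      rintro ⟨h1, h2⟩
      exact hw (Prod.ext h1 h2)
  have h2 : ∑ w : (Fin (n + 1) → k) × (Fin (n + 1) → k),
      (if w.1 ∈ pL k (n + 1) then ((Fintype.card k ^ n : ℕ) : Fp)⁻¹ * pe0 Fp (pdot w.1 w.2)
        else 0) * δy (fun j => w.1 j * pdot w.2 x)
      = δy x - δy 0 := by
    rw [Fintype.sum_prod_type]
    have hrw : ∀ a : Fin (n + 1) → k,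
        (∑ b : Fin (n + 1) → k, (if a ∈ pL k (n + 1)
          then ((Fintype.card k ^ n : ℕ) : Fp)⁻¹ * pe0 Fp (pdot a b) else 0) *
            δy (fun j => a j * pdot b x))
        = (if a ∈ pL k (n + 1) then ((Fintype.card k ^ n : ℕ) : Fp)⁻¹ *
            (∑ b, pe0 Fp (pdot a b) * δy (fun j => a j * pdot b x)) else 0) := by
      intro a
      split
      · rw [Finset.mul_sum]
        refine Finset.sum_congr rfl fun b _ => by ring
      · simp
    rw [Finset.sum_congr rfl fun a _ => hrw a]
    rw [Finset.sum_ite_mem, Finset.univ_inter, ← Finset.mul_sum]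
    have := master (n := n) hq δy x
    rw [this]
    ring
  rw [h1, h2]
  show δy 0 + (δy x - δy 0) = δy x
  ring

end Kernel

section Multi
variable {Fp : Type*} [Field Fp]

lemma ind_pi {m : ℕ} {τ : Fin m → Type*} [∀ i, DecidableEq (τ i)] (z y : ∀ i, τ i) :
    (if z = y then (1:Fp) else 0) = ∏ i, (if z i = y i then (1:Fp) else 0) := by
  by_cases h : z = y
  · subst h; simp
  · rw [if_neg h]
    obtain ⟨i, hi⟩ : ∃ i, z i ≠ y i := by
      by_contra hc; push_neg at hc; exact h (funext hc)
    exact (Finset.prod_eq_zero (mem_univ i)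
      (show (if z i = y i then (1:Fp) else 0) = 0 from if_neg hi)).symm

lemma multi_master {m n : ℕ} (K : Fin m → Type*) [∀ i, Field (K i)] [∀ i, Fintype (K i)]
    [∀ i, DecidableEq (K i)]
    (hq : ∀ i, ((Fintype.card (K i) : ℕ) : Fp) ≠ 0)
    (f : (∀ i, Fin (n + 1) → K i) → Fp) (x : ∀ i, Fin (n + 1) → K i) :
    f x = ∑ w : ∀ i, (Fin (n + 1) → K i) × (Fin (n + 1) → K i),
      (∏ i, pker Fp (((Fintype.card (K i) ^ n : ℕ) : Fp)⁻¹) (w i).1 (w i).2) *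
        f (fun i => fun j => (w i).1 j * pdot ((w i).2) (x i)) := by
  have point : ∀ z : ∀ i, Fin (n + 1) → K i,
      f z = ∑ y : ∀ i, Fin (n + 1) → K i, (if z = y then (1:Fp) else 0) * f y := by
    intro z
    rw [Finset.sum_eq_single_of_mem z (mem_univ z)]
    · simp
    · intro y _ hy; rw [if_neg (Ne.symm hy), zero_mul]
  have key : ∀ y : ∀ i, Fin (n + 1) → K i,
      (∑ w : ∀ i, (Fin (n + 1) → K i) × (Fin (n + 1) → K i),
        (∏ i, pker Fp (((Fintype.card (K i) ^ n : ℕ) : Fp)⁻¹) (w i).1 (w i).2) *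
          ((if (fun i => fun j => (w i).1 j * pdot ((w i).2) (x i)) = y then (1:Fp) else 0)
            * f y))
      = (if x = y then (1:Fp) else 0) * f y := by
    intro y
    rw [Finset.sum_congr rfl fun w (_ : w ∈ (univ : Finset (∀ i, (Fin (n + 1) → K i) × (Fin (n + 1) → K i)))) => (mul_assoc _ _ (f y)).symm]
    rw [← Finset.sum_mul]
    congr 1
    have expand : ∀ w : ∀ i, (Fin (n + 1) → K i) × (Fin (n + 1) → K i),
        (∏ i, pker Fp (((Fintype.card (K i) ^ n : ℕ) : Fp)⁻¹) (w i).1 (w i).2) *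
          (if (fun i => fun j => (w i).1 j * pdot ((w i).2) (x i)) = y then (1:Fp) else 0)
        = ∏ i, (pker Fp (((Fintype.card (K i) ^ n : ℕ) : Fp)⁻¹) (w i).1 (w i).2 *
            (if (fun j => (w i).1 j * pdot ((w i).2) (x i)) = y i then (1:Fp) else 0)) := by
      intro w
      rw [ind_pi, ← Finset.prod_mul_distrib]
    rw [Finset.sum_congr rfl fun w _ => expand w]
    rw [← Fintype.prod_sum (f := fun i (p : (Fin (n + 1) → K i) × (Fin (n + 1) → K i)) =>
      pker Fp (((Fintype.card (K i) ^ n : ℕ) : Fp)⁻¹) p.1 p.2 *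
        (if (fun j => p.1 j * pdot p.2 (x i)) = y i then (1:Fp) else 0))]
    rw [ind_pi]
    exact Finset.prod_congr rfl fun i _ => kernel_sum (hq i) (x i) (y i)
  symm
  rw [Finset.sum_congr rfl fun w (_ : w ∈ (univ : Finset (∀ i, (Fin (n + 1) → K i) × (Fin (n + 1) → K i)))) => by
    rw [point (fun i => fun j => (w i).1 j * pdot ((w i).2) (x i)), Finset.mul_sum]]
  rw [Finset.sum_comm]
  rw [Finset.sum_congr rfl fun y _ => key y]
  exact (point x).symm

end Multi


section Clonoid
variable {m : ℕ} {K : Fin m → Type*} [∀ i, Field (K i)] {F : Type*} [CommRing F]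
variable {C : ∀ n : ℕ, Set ((∀ i, Fin n → K i) → F)}

lemma IsLCC.zero_mem' (hC : IsLCC K F C) (n : ℕ) : (fun _ => (0 : F)) ∈ C n := by
  obtain ⟨n₀, f₀, hf₀⟩ := hC.1
  have h := hC.2.1 n₀ 0 0 f₀ f₀ hf₀ hf₀
  have e : (fun x => 0 * f₀ x + 0 * f₀ x) = fun _ : ∀ i, Fin n₀ → K i => (0 : F) := by
    funext x; ring
  rw [e] at h
  have h2 := hC.2.2 n₀ n _ h (fun i => (0 : Matrix (Fin n₀) (Fin n) (K i)))
  exact h2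

lemma IsLCC.finsum_mem (hC : IsLCC K F C) {n : ℕ} {τ : Type*} [DecidableEq τ]
    (s : Finset τ) (coef : τ → F) (g : τ → ((∀ i, Fin n → K i) → F))
    (hg : ∀ t ∈ s, g t ∈ C n) :
    (fun x => ∑ t ∈ s, coef t * g t x) ∈ C n := by
  induction s using Finset.induction_on with
  | empty => simpa using hC.zero_mem' n
  | @insert a s ha ih =>
    have h1 : g a ∈ C n := hg a (Finset.mem_insert_self a s)
    have h2 := ih fun t ht => hg t (Finset.mem_insert_of_mem ht)
    have h3 := hC.2.1 n (coef a) 1 (g a) _ h1 h2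
    have e : (fun x => coef a * g a x + 1 * ((fun x => ∑ t ∈ s, coef t * g t x) x))
        = fun x => ∑ t ∈ insert a s, coef t * g t x := by
      funext x
      rw [Finset.sum_insert ha]
      ring
    rw [e] at h3
    exact h3

end Clonoid
/-- if `∏ᵢ qᵢ` is coprime to `p`, every `(F_p, K)`-linearly closed
clonoid is generated by its unary part. -/
theorem lcc_generated_by_unary_part
    {m : ℕ} (K : Fin m → Type*) [∀ i, Field (K i)] [∀ i, Fintype (K i)]
    (Fp : Type*) [Field Fp] [Fintype Fp]
    (hcop : Nat.Coprime (∏ i, Fintype.card (K i)) (Fintype.card Fp))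
    (C : ∀ n : ℕ, Set ((∀ i, Fin n → K i) → Fp)) (hC : IsLCC K Fp C) :
    ∀ n, C n = ClgU K Fp (C 1) n := by
  classical
  have hq : ∀ i, ((Fintype.card (K i) : ℕ) : Fp) ≠ 0 := by
    intro i hzero
    set p := ringChar Fp with hpdef
    haveI : CharP Fp p := ringChar.charP Fp
    have hp : p.Prime := CharP.char_is_prime Fp p
    have hdvd1 : p ∣ Fintype.card (K i) := (CharP.cast_eq_zero_iff Fp p _).1 hzero
    obtain ⟨nn, -, hcard⟩ := FiniteField.card Fp p
    have hdvd2 : p ∣ Fintype.card Fp := by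
      rw [hcard]; exact dvd_pow_self p nn.ne_zero
    have hco : Nat.Coprime (Fintype.card (K i)) (Fintype.card Fp) :=
      Nat.Coprime.coprime_dvd_left (Finset.dvd_prod_of_mem (fun i => Fintype.card (K i)) (mem_univ i)) hcop
    exact hp.one_lt.ne' (Nat.dvd_one.1 (hco ▸ Nat.dvd_gcd hdvd1 hdvd2))
  intro n
  apply Set.eq_of_subset_of_subset
  · -- C n ⊆ ClgU
    intro f hf C' hC' hsub
    match n with
    | 0 =>
      have hu := hC.2.2 0 1 f hf (fun i => (0 : Matrix (Fin 0) (Fin 1) (K i)))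
      have hu' := hsub hu
      have h2 := hC'.2.2 1 0 _ hu' (fun i => (0 : Matrix (Fin 1) (Fin 0) (K i)))
      have e : (fun x : ∀ i, Fin 0 → K i =>
          f (fun i => (0 : Matrix (Fin 0) (Fin 1) (K i)).mulVec
            ((0 : Matrix (Fin 1) (Fin 0) (K i)).mulVec (x i)))) = f := by
        funext x
        exact congrArg f (funext fun i => funext fun j => j.elim0)
      rw [e] at h2
      exact h2
    | Nat.succ n =>
      set g : (∀ i, (Fin (n + 1) → K i) × (Fin (n + 1) → K i)) →
          ((∀ i, Fin (n + 1) → K i) → Fp) :=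
        fun w x => f (fun i => fun j => (w i).1 j * pdot ((w i).2) (x i)) with hg_def
      have hg : ∀ w, g w ∈ C' (n + 1) := by
        intro w
        have hu := hC.2.2 (n + 1) 1 f hf
          (fun i => Matrix.of fun j (_ : Fin 1) => (w i).1 j)
        have hu' := hsub hu
        have h2 := hC'.2.2 1 (n + 1) _ hu'
          (fun i => Matrix.of fun (_ : Fin 1) l => (w i).2 l)
        have e : (fun x : ∀ i, Fin (n + 1) → K i =>
            f (fun i => (Matrix.of fun j (_ : Fin 1) => (w i).1 j).mulVec
              ((Matrix.of fun (_ : Fin 1) l => (w i).2 l).mulVec (x i))))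
            = g w := by
          funext x
          refine congrArg f (funext fun i => funext fun j => ?_)
          simp [Matrix.mulVec, dotProduct, pdot, Fin.sum_univ_one]
        rw [e] at h2
        exact h2
      have hmaster : f = fun x => ∑ w : ∀ i, (Fin (n + 1) → K i) × (Fin (n + 1) → K i),
          (∏ i, pker Fp (((Fintype.card (K i) ^ n : ℕ) : Fp)⁻¹) (w i).1 (w i).2) *
            g w x := funext fun x => multi_master K hq f x
      rw [hmaster]
      have := hC'.finsum_mem (n := n + 1) Finset.univ
        (fun w => ∏ i, pker Fp (((Fintype.card (K i) ^ n : ℕ) : Fp)⁻¹) (w i).1 (w i).2)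
        g (fun w _ => hg w)
      exact this
  · -- ClgU ⊆ C n
    intro f hf
    exact hf C hC (Set.Subset.refl _)
end

section
/- Let F = ∏_{i=1}^s F_{pᵢ} and K = ∏_{j=1}^m F_{qⱼ} be products of finite fields. Then the lattice of all (F, K)-linearly closed clonoids is isomorphic to the direct product of the lattices of all (F_{pᵢ}, K)-linearly closed clonoids, 1 ≤ i ≤ s, via C ↦ (ρ₁(C),…,ρ_s(C)) where ρᵢ(C) = {πᵢ ∘ g : g ∈ C} and πᵢ is the i-th coordinate projection of F. -/
section Helpers

variable {m : ℕ} {K : Fin m → Type*} [∀ i, Field (K i)] {F : Type*} [CommRing F]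
  {C : ∀ n : ℕ, Set ((∀ i, Fin n → K i) → F)}

lemma lcc_nonempty (h : IsLCC K F C) (n : ℕ) : (C n).Nonempty := by
  obtain ⟨l, f, hf⟩ := h.1
  exact ⟨_, h.2.2 l n f hf (fun i => 0)⟩

lemma lcc_smul (h : IsLCC K F C) {n : ℕ} (a : F) {f} (hf : f ∈ C n) :
    (fun x => a * f x) ∈ C n := by
  have := h.2.1 n a 0 f f hf hf
  simpa using this

lemma lcc_sum (h : IsLCC K F C) {n : ℕ} {ι : Type*} (t : Finset ι)
    (a : ι → F) (f : ι → ((∀ i, Fin n → K i) → F)) (hf : ∀ i ∈ t, f i ∈ C n) :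
    (fun x => ∑ i ∈ t, a i * f i x) ∈ C n := by
  classical
  induction t using Finset.induction with
  | empty =>
    have := lcc_smul h (0 : F) (lcc_nonempty h n).choose_spec
    simpa using this
  | @insert j t hj ih =>
    have hj' : f j ∈ C n := hf j (Finset.mem_insert_self j t)
    have ht : (fun x => ∑ i ∈ t, a i * f i x) ∈ C n :=
      ih (fun i hi => hf i (Finset.mem_insert_of_mem hi))
    have := h.2.1 n (a j) 1 _ _ hj' ht
    simpa [Finset.sum_insert hj] using this

lemma lcc_mem_of_proj {s : ℕ} {Fp : Fin s → Type*} [∀ i, Field (Fp i)]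
    {D : ∀ n : ℕ, Set ((∀ i, Fin n → K i) → ∀ i, Fp i)}
    (hD : IsLCC K (∀ i, Fp i) D) {n : ℕ} (g : (∀ i, Fin n → K i) → ∀ i, Fp i)
    (hg : ∀ i, ∃ h ∈ D n, (fun x => g x i) = fun x => h x i) : g ∈ D n := by
  classical
  choose h hh hgh using hg
  have key : g = fun x => ∑ i, Pi.single i (1 : Fp i) * h i x := by
    funext x j
    have h1 : (∑ i, Pi.single i (1 : Fp i) * h i x) j
        = ∑ i, (Pi.single i (1 : Fp i) * h i x) j := by
      rw [Finset.sum_apply]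
    rw [h1, Finset.sum_eq_single j]
    · have := congrFun (hgh j) x
      simp [Pi.mul_apply, Pi.single_eq_same, ← this]
    · intro b _ hbj
      have : Pi.single b (1 : Fp b) j = 0 := Pi.single_eq_of_ne hbj.symm _
      simp [Pi.mul_apply, this]
    · intro hju; exact absurd (Finset.mem_univ j) hju
  rw [key]
  exact lcc_sum hD Finset.univ _ _ (fun i _ => hh i)

end Helpers

/-- the lattice of `(F, K)`-linearly closed clonoids, for
`F = ∏ᵢ F_{pᵢ}`, is isomorphic to the direct product of the lattices of
`(F_{pᵢ}, K)`-linearly closed clonoids, via `C ↦ (ρ₁(C),…,ρ_s(C))` with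
`ρᵢ(C) = {πᵢ ∘ g : g ∈ C}`:  `ρ` is well defined, bijective between the sets of
clonoids, and an order isomorphism. -/
theorem lcc_lattice_iso_prod
    {m s : ℕ} (K : Fin m → Type*) [∀ i, Field (K i)] [∀ i, Fintype (K i)]
    (Fp : Fin s → Type*) [∀ i, Field (Fp i)] [∀ i, Fintype (Fp i)] :
    letI rho : (∀ n : ℕ, Set ((∀ i, Fin n → K i) → (∀ i, Fp i))) → ∀ i : Fin s,
        ∀ n : ℕ, Set ((∀ i, Fin n → K i) → Fp i) :=
      fun C i n => {f | ∃ g ∈ C n, f = fun x => g x i}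
    (∀ C, IsLCC K (∀ i, Fp i) C → ∀ i, IsLCC K (Fp i) (rho C i)) ∧
    (∀ C D, IsLCC K (∀ i, Fp i) C → IsLCC K (∀ i, Fp i) D →
      (∀ i, rho C i = rho D i) → C = D) ∧
    (∀ D : ∀ i : Fin s, ∀ n : ℕ, Set ((∀ i, Fin n → K i) → Fp i),
      (∀ i, IsLCC K (Fp i) (D i)) →
      ∃ C, IsLCC K (∀ i, Fp i) C ∧ ∀ i, rho C i = D i) ∧
    (∀ C D, IsLCC K (∀ i, Fp i) C → IsLCC K (∀ i, Fp i) D →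
      ((∀ n, C n ⊆ D n) ↔ ∀ i n, rho C i n ⊆ rho D i n)) := by
  classical
  constructor
  · intro C hC i
    refine ⟨⟨0, ?_⟩, ?_, ?_⟩
    · obtain ⟨g, hg⟩ := lcc_nonempty hC 0
      exact ⟨_, g, hg, rfl⟩
    · rintro n a b f g ⟨f', hf', rfl⟩ ⟨g', hg', rfl⟩
      refine ⟨_, hC.2.1 n (Pi.single i a) (Pi.single i b) f' g' hf' hg', ?_⟩
      funext x
      simp [Pi.single_eq_same]
    · rintro n l f ⟨g, hg, rfl⟩ A
      exact ⟨_, hC.2.2 n l g hg A, rfl⟩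
  refine ⟨?inj, ?surj, ?ord⟩
  case inj =>
    intro C D hC hD hCD
    funext n
    ext g
    constructor
    · intro hg
      refine lcc_mem_of_proj hD g (fun i => ?_)
      have hm : (fun x => g x i) ∈ {f | ∃ g' ∈ D n, f = fun x => g' x i} :=
        le_of_eq (congrFun (hCD i) n) ⟨g, hg, rfl⟩
      obtain ⟨h, hh, he⟩ := hm
      exact ⟨h, hh, he⟩
    · intro hg
      refine lcc_mem_of_proj hC g (fun i => ?_)
      have hm : (fun x => g x i) ∈ {f | ∃ g' ∈ C n, f = fun x => g' x i} :=
        le_of_eq (congrFun (hCD i) n).symm ⟨g, hg, rfl⟩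
      obtain ⟨h, hh, he⟩ := hm
      exact ⟨h, hh, he⟩
  case surj =>
    intro D hD
    refine ⟨fun n => {g | ∀ i, (fun x => g x i) ∈ D i n}, ⟨⟨0, ?_⟩, ?_, ?_⟩, ?_⟩
    · exact ⟨fun x i => (lcc_nonempty (hD i) 0).choose x,
        fun i => (lcc_nonempty (hD i) 0).choose_spec⟩
    · intro n a b f g hf hg i
      have := (hD i).2.1 n (a i) (b i) _ _ (hf i) (hg i)
      simpa using this
    · intro n l f hf A i
      exact (hD i).2.2 n l _ (hf i) A
    · intro i
      funext n
      ext f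
      constructor
      · rintro ⟨g, hg, rfl⟩
        exact hg i
      · intro hf
        refine ⟨fun x => Function.update
            (fun j => (lcc_nonempty (hD j) n).choose x) i (f x), fun j => ?_, ?_⟩
        · rcases eq_or_ne j i with rfl | hji
          · simpa using hf
          · have heq : (fun x => Function.update
                (fun j => (lcc_nonempty (hD j) n).choose x) i (f x) j)
                = (lcc_nonempty (hD j) n).choose := by
              funext x; exact Function.update_of_ne hji _ _
            rw [heq]
            exact (lcc_nonempty (hD j) n).choose_spec
        · funext x; simp
  case ord =>
    intro C D hC hD
    constructor
    · rintro h i n f ⟨g, hg, rfl⟩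
      exact ⟨g, h n hg, rfl⟩
    · intro h n g hg
      refine lcc_mem_of_proj hD g (fun i => ?_)
      have hm : (fun x => g x i) ∈ {f | ∃ g' ∈ D n, f = fun x => g' x i} :=
        h i n ⟨g, hg, rfl⟩
      obtain ⟨h', hh', he⟩ := hm
      exact ⟨h', hh', he⟩
end

section
/- Let K be a finite product of finite fields, p a prime power, and K^× the multiplicative monoid of K. A subset V ⊆ F_p^K is the unary part of an (F_p, K)-linearly closed clonoid if and only if V is an F_p[K^×]-submodule of F_p^K, i.e., V is an F_p-subspace of F_p^K closed under the operations f ↦ ((x₁,…,xₘ) ↦ f(a₁x₁,…,aₘxₘ)) for all (a₁,…,aₘ) ∈ K. -/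
/-- Generating set: unary functions from `V` precomposed with matrix maps. -/
def genSet {m : ℕ} (K : Fin m → Type*) [∀ i, Field (K i)] (Fp : Type*) [Field Fp]
    (V : Set ((∀ i, Fin 1 → K i) → Fp)) (n : ℕ) : Set ((∀ i, Fin n → K i) → Fp) :=
  {h | ∃ g ∈ V, ∃ A : ∀ i, Matrix (Fin 1) (Fin n) (K i),
    h = fun x => g (fun i => (A i).mulVec (x i))}

def genMod {m : ℕ} (K : Fin m → Type*) [∀ i, Field (K i)] (Fp : Type*) [Field Fp]
    (V : Set ((∀ i, Fin 1 → K i) → Fp)) (n : ℕ) :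
    Submodule Fp ((∀ i, Fin n → K i) → Fp) :=
  Submodule.span Fp (genSet K Fp V n)

lemma genMod_comp {m : ℕ} (K : Fin m → Type*) [∀ i, Field (K i)] (Fp : Type*) [Field Fp]
    (V : Set ((∀ i, Fin 1 → K i) → Fp)) (n l : ℕ)
    (f : (∀ i, Fin n → K i) → Fp) (hf : f ∈ genMod K Fp V n)
    (A : ∀ i, Matrix (Fin n) (Fin l) (K i)) :
    (fun x : ∀ i, Fin l → K i => f (fun i => (A i).mulVec (x i))) ∈ genMod K Fp V l := by
  let φ : (∀ i, Fin l → K i) → (∀ i, Fin n → K i) := fun x i => (A i).mulVec (x i)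
  have key : LinearMap.funLeft Fp Fp φ f ∈ genMod K Fp V l := by
    have hmap : Submodule.map (LinearMap.funLeft Fp Fp φ) (genMod K Fp V n)
        ≤ genMod K Fp V l := by
      rw [genMod, Submodule.map_span, Submodule.span_le]
      rintro _ ⟨h, ⟨g, hg, B, rfl⟩, rfl⟩
      refine Submodule.subset_span ⟨g, hg, fun i => B i * A i, ?_⟩
      funext x
      simp [LinearMap.funLeft, φ, Matrix.mulVec_mulVec]
    exact hmap ⟨f, hf, rfl⟩
  exact key

/-- `V ⊆ F_p^K` is the unary part of an `(F_p, K)`-linearly closed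
clonoid iff it is an `F_p[K^×]`-submodule of `F_p^K`, i.e. a nonempty subset closed
under `F_p`-linear combinations and under scaling of the arguments by elements of
the multiplicative monoid `K^× = ∏ᵢ F_{qᵢ}`. -/
theorem unary_part_iff_submodule
    {m : ℕ} (K : Fin m → Type*) [∀ i, Field (K i)] [∀ i, Fintype (K i)]
    (Fp : Type*) [Field Fp] [Fintype Fp]
    (V : Set ((∀ i, Fin 1 → K i) → Fp)) :
    (∃ C : ∀ n : ℕ, Set ((∀ i, Fin n → K i) → Fp), IsLCC K Fp C ∧ C 1 = V) ↔
    (V.Nonempty ∧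
      (∀ (a b : Fp) (f g : (∀ i, Fin 1 → K i) → Fp), f ∈ V → g ∈ V →
        (fun x => a * f x + b * g x) ∈ V) ∧
      (∀ f ∈ V, ∀ c : ∀ i, K i,
        (fun x : ∀ i, Fin 1 → K i => f (fun i j => c i * x i j)) ∈ V)) := by
  constructor
  · rintro ⟨C, ⟨⟨n, f, hf⟩, hlin, hmat⟩, rfl⟩
    refine ⟨⟨_, hmat n 1 f hf (fun i => 0)⟩, fun a b f g hf hg => hlin 1 a b f g hf hg, ?_⟩
    intro f hf c
    have h := hmat 1 1 f hf (fun i => Matrix.of fun _ _ => c i)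
    have heq : (fun x : ∀ i, Fin 1 → K i => f (fun i j => c i * x i j))
        = fun x : ∀ i, Fin 1 → K i =>
          f (fun i => ((Matrix.of fun _ _ => c i : Matrix (Fin 1) (Fin 1) (K i))).mulVec (x i)) := by
      funext x
      congr 1
      funext i j
      have hj : j = 0 := Subsingleton.elim _ _
      subst hj
      simp [Matrix.mulVec, dotProduct]
    rw [heq]; exact h
  · rintro ⟨⟨g0, hg0⟩, hlin, hscale⟩
    refine ⟨fun n => (genMod K Fp V n : Set _), ⟨⟨1, g0, ?_⟩, ?_, ?_⟩, ?_⟩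
    · exact Submodule.subset_span ⟨g0, hg0, fun i => 1, by
        funext x; congr 1; funext i; rw [Matrix.one_mulVec]⟩
    · intro n a b f g hf hg
      have : (fun x => a * f x + b * g x) = a • f + b • g := by
        funext x; simp [smul_eq_mul]
      show (fun x => a * f x + b * g x) ∈ genMod K Fp V n
      rw [this]
      exact Submodule.add_mem _ (Submodule.smul_mem _ _ hf) (Submodule.smul_mem _ _ hg)
    · intro n l f hf A
      exact genMod_comp K Fp V n l f hf A
    · apply Set.Subset.antisymm
      · let VSub : Submodule Fp ((∀ i, Fin 1 → K i) → Fp) :=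
          { carrier := V
            zero_mem' := by
              have h := hlin 0 0 g0 g0 hg0 hg0
              have : (0 : (∀ i, Fin 1 → K i) → Fp) = fun x => 0 * g0 x + 0 * g0 x := by
                funext x; simp
              rw [this]; exact h
            add_mem' := by
              intro f g hf hg
              have h := hlin 1 1 f g hf hg
              have : f + g = fun x => 1 * f x + 1 * g x := by funext x; simp
              rw [this]; exact h
            smul_mem' := by
              intro a f hf
              have h := hlin a 0 f f hf hf
              have : a • f = fun x => a * f x + 0 * f x := by
                funext x; simp [smul_eq_mul]
              rw [this]; exact h }
        have : genMod K Fp V 1 ≤ VSub := by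
          rw [genMod, Submodule.span_le]
          rintro _ ⟨g, hg, B, rfl⟩
          have heq : (fun x : ∀ i, Fin 1 → K i => g (fun i => (B i).mulVec (x i)))
              = fun x : ∀ i, Fin 1 → K i => g (fun i j => (B i 0 0) * x i j) := by
            funext x; congr 1; funext i j
            have hj : j = 0 := Subsingleton.elim _ _
            subst hj
            simp [Matrix.mulVec, dotProduct]
          show (fun x : ∀ i, Fin 1 → K i => g (fun i => (B i).mulVec (x i))) ∈ V
          rw [heq]
          exact hscale g hg (fun i => B i 0 0)
        exact this
      · intro g hg
        exact Submodule.subset_span ⟨g, hg, fun i => 1, by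
          funext x; congr 1; funext i; rw [Matrix.one_mulVec]⟩
end

section
/- Let q₁,…,qₘ and p be prime powers, K = ∏ᵢ F_{qᵢ}, h ≤ m, K₁ = ∏_{i=1}^h F_{qᵢ}. Let C be an (F_p, K)-linearly closed clonoid and C|_{K₁} = {g : ∃g' ∈ C with g'|_{K₁} = g}, where g'|_{K₁}(x₁,…,x_h) := g'(x₁,…,x_h,0,…,0). If f : ∏_{i=1}^m F_{qᵢ}^s → F_p depends exactly on the argument blocks indexed by [h], then f ∈ Clg(C^[1])^[s] if and only if f|_{K₁} ∈ Clg(C|_{K₁}^[1])^[s]. -/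
/-- restriction lemma. Let `K₁ = ∏_{i<h} F_{qᵢ}` and let `C|_{K₁}` consist
of the restrictions of members of `C` obtained by setting the last `m - h` argument
blocks to zero. If `f` depends exactly on the argument blocks indexed by `[h]`, then
`f ∈ Clg(C^[1])^[s]` iff `f|_{K₁} ∈ Clg(C|_{K₁}^[1])^[s]`. -/
theorem restriction_clg_iff
    {m h : ℕ} (hm : h ≤ m) (K : Fin m → Type*) [∀ i, Field (K i)] [∀ i, Fintype (K i)]
    (Fp : Type*) [Field Fp] [Fintype Fp]
    (C : ∀ n : ℕ, Set ((∀ i, Fin n → K i) → Fp)) (hC : IsLCC K Fp C)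
    {s : ℕ} (f : (∀ i : Fin m, Fin s → K i) → Fp)
    (hdep : ∀ i : Fin m,
      ((∃ x y : ∀ i, Fin s → K i, (∀ j, j ≠ i → x j = y j) ∧ f x ≠ f y) ↔ (i : ℕ) < h)) :
    letI res : ∀ n : ℕ, ((∀ i : Fin m, Fin n → K i) → Fp) →
        ((∀ i : Fin h, Fin n → K (Fin.castLE hm i)) → Fp) :=
      fun n g y => g (fun i => if hi : (i : ℕ) < h then y ⟨(i : ℕ), hi⟩ else 0)
    (f ∈ ClgU K Fp (C 1) s ↔
      res s f ∈ ClgU (fun i : Fin h => K (Fin.castLE hm i)) Fp (res 1 '' C 1) s) := by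
  set res : ∀ n : ℕ, ((∀ i : Fin m, Fin n → K i) → Fp) →
      ((∀ i : Fin h, Fin n → K (Fin.castLE hm i)) → Fp) :=
    fun n g y => g (fun i => if hi : (i : ℕ) < h then y ⟨(i : ℕ), hi⟩ else 0) with hres
  constructor
  · -- forward direction
    intro hf D' hD' hsub
    have hDlcc : IsLCC K Fp (fun n => {g | res n g ∈ D' n}) := by
      refine ⟨?_, ?_, ?_⟩
      · obtain ⟨n, g', hg'⟩ := hD'.1
        refine ⟨n, fun x => g' (fun i => x (Fin.castLE hm i)), ?_⟩
        have : res n (fun x => g' (fun i => x (Fin.castLE hm i))) = g' := by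
          funext y
          show g' _ = g' y
          congr 1
          funext i
          exact dif_pos i.isLt
        simpa [this] using hg'
      · intro n a b f' g' hf' hg'
        exact hD'.2.1 n a b (res n f') (res n g') hf' hg'
      · intro n l g hg A
        have key : res l (fun x => g (fun i => (A i).mulVec (x i))) =
            fun y => (res n g) (fun i : Fin h => (A (Fin.castLE hm i)).mulVec (y i)) := by
          funext y
          show g _ = g _
          congr 1
          funext i
          by_cases hi : (i : ℕ) < h
          · simp only [dif_pos hi]
            rfl
          · simp only [dif_neg hi, Matrix.mulVec_zero]
        show res l (fun x => g (fun i => (A i).mulVec (x i))) ∈ D' l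
        rw [key]
        exact hD'.2.2 n l (res n g) hg (fun i => A (Fin.castLE hm i))
    have hsub' : C 1 ⊆ {g | res 1 g ∈ D' 1} := fun g hg => hsub ⟨g, hg, rfl⟩
    exact hf _ hDlcc hsub'
  · -- backward direction
    intro hf D hD hsub
    -- extension operator
    have indep : ∀ i : Fin m, ¬ (i : ℕ) < h →
        ∀ x y : ∀ i, Fin s → K i, (∀ j, j ≠ i → x j = y j) → f x = f y := by
      intro i hi x y hxy
      by_contra hne
      exact hi ((hdep i).1 ⟨x, y, hxy, hne⟩)
    -- f agrees with its truncation
    have main : ∀ x : ∀ i : Fin m, Fin s → K i,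
        f (fun i => if (i : ℕ) < h then x i else 0) = f x := by
      intro x
      set X : ℕ → ∀ i : Fin m, Fin s → K i :=
        fun t i => if (i : ℕ) < h then x i else if (i : ℕ) < t then 0 else x i with hX
      have step : ∀ t : ℕ, f (X (h + t)) = f x := by
        intro t
        induction t with
        | zero =>
          congr 1
          funext i
          simp only [hX]
          split_ifs with h1 h2
          · rfl
          · omega
          · rfl
        | succ t ih =>
          by_cases hmt : h + t < m
          · have hstep : f (X (h + (t + 1))) = f (X (h + t)) := by
              refine indep ⟨h + t, hmt⟩ (by simp) (X (h + (t + 1))) (X (h + t)) ?_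
              intro j hj
              have hjv : (j : ℕ) ≠ h + t := by
                intro hc
                exact hj (Fin.ext hc)
              simp only [hX]
              split_ifs with h1 h2 h3 <;> first | rfl | omega
            rw [hstep, ih]
          · have hXeq : X (h + (t + 1)) = X (h + t) := by
              funext i
              have him := i.isLt
              have h2 : (i : ℕ) < h + t := by omega
              have h3 : (i : ℕ) < h + (t + 1) := by omega
              simp only [hX]
              split_ifs <;> first | rfl | omega
            rw [hXeq, ih]
      have hm' : h + (m - h) = m := by omega
      have := step (m - h)
      rw [hm'] at this
      rw [← this]
      congr 1
      funext i
      have him := i.isLt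
      simp only [hX]
      split_ifs <;> first | rfl | omega
    have hD'lcc : IsLCC (fun i : Fin h => K (Fin.castLE hm i)) Fp
        (fun n => {g' | (fun x : ∀ i : Fin m, Fin n → K i =>
          g' (fun i => x (Fin.castLE hm i))) ∈ D n}) := by
      refine ⟨?_, ?_, ?_⟩
      · obtain ⟨n, g, hg⟩ := hD.1
        refine ⟨n, fun _ => g 0, ?_⟩
        have h0 := hD.2.2 n n g hg (fun i => 0)
        have heq : (fun x : ∀ i : Fin m, Fin n → K i =>
            g (fun i => (0 : Matrix (Fin n) (Fin n) (K i)).mulVec (x i))) =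
            (fun _ : ∀ i : Fin m, Fin n → K i => g 0) := by
          funext x
          congr 1
          funext i
          simp [Matrix.zero_mulVec]
        rw [heq] at h0
        exact h0
      · intro n a b f' g' hf' hg'
        exact hD.2.1 n a b _ _ hf' hg'
      · intro n l g' hg' A'
        set A : ∀ i : Fin m, Matrix (Fin n) (Fin l) (K i) :=
          fun i => if hi : (i : ℕ) < h then A' ⟨(i : ℕ), hi⟩ else 0 with hA
        have key : (fun x : ∀ i : Fin m, Fin l → K i =>
            g' (fun i => (A' i).mulVec (x (Fin.castLE hm i)))) =
            (fun x : ∀ i : Fin m, Fin l → K i =>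
              (fun x' : ∀ i : Fin m, Fin n → K i => g' (fun i => x' (Fin.castLE hm i)))
                (fun i => (A i).mulVec (x i))) := by
          funext x
          congr 1
          funext i
          show (A' i).mulVec (x (Fin.castLE hm i)) =
            (A (Fin.castLE hm i)).mulVec (x (Fin.castLE hm i))
          have hAi : A (Fin.castLE hm i) = A' i := dif_pos i.isLt
          rw [hAi]
        show (fun x : ∀ i : Fin m, Fin l → K i =>
            g' (fun i => (A' i).mulVec (x (Fin.castLE hm i)))) ∈ D l
        rw [key]
        exact hD.2.2 n l _ hg' A
    have hsub' : res 1 '' C 1 ⊆ {g' | (fun x : ∀ i : Fin m, Fin 1 → K i =>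
        g' (fun i => x (Fin.castLE hm i))) ∈ D 1} := by
      rintro _ ⟨g, hg, rfl⟩
      set B : ∀ i : Fin m, Matrix (Fin 1) (Fin 1) (K i) :=
        fun i => if (i : ℕ) < h then 1 else 0 with hB
      have h1 := hD.2.2 1 1 g (hsub hg) B
      have key : (fun x : ∀ i : Fin m, Fin 1 → K i =>
          (res 1 g) (fun i => x (Fin.castLE hm i))) =
          (fun x : ∀ i : Fin m, Fin 1 → K i => g (fun i => (B i).mulVec (x i))) := by
        funext x
        show g _ = g _
        congr 1
        funext i
        by_cases hi : (i : ℕ) < h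
        · simp only [dif_pos hi, hB, if_pos hi, Matrix.one_mulVec]
          rfl
        · simp only [dif_neg hi, hB, if_neg hi, Matrix.zero_mulVec]
      show (fun x : ∀ i : Fin m, Fin 1 → K i =>
          (res 1 g) (fun i => x (Fin.castLE hm i))) ∈ D 1
      rw [key]
      exact h1
    have hmem := hf _ hD'lcc hsub'
    have hfeq : (fun x : ∀ i : Fin m, Fin s → K i =>
        (res s f) (fun i => x (Fin.castLE hm i))) = f := by
      funext x
      show f _ = f x
      rw [← main x]
      congr 1
    have hmem' : (fun x : ∀ i : Fin m, Fin s → K i =>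
        (res s f) (fun i => x (Fin.castLE hm i))) ∈ D s := hmem
    rwa [hfeq] at hmem'
end
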